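/- arXiv:1905.07301 — 3 statements merged into one kernel-verified Lean document; each statement's English description precedes it below -/
import Mathlib

section
/- For every integer k ≥ 2, the prism of order 4k + 2 (i.e., the Cartesian product C_{2k+1} □ K_2) is an essentially 4-edge-connected cubic near-bipartite brick. -/
namespace Paper

open SimpleGraph

variable {V : Type*}

/-- `∂(X)`: the set of edges of `G` with exactly one end in `X`. -/
def cutEdges (G : SimpleGraph V) (X : Set V) : Set (Sym2 V) :=
  {e | e ∈ G.edgeSet ∧ ∃ x y, e = s(x, y) ∧ x ∈ X ∧ y ∉ X}

/-- An edge cut `∂(X)` is trivial if `X` or its complement is a singleton. -/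
def IsTrivialShore (X : Set V) : Prop :=
  (∃ v, X = {v}) ∨ (∃ v, Xᶜ = {v})

/-- The edge cut `∂(X)` is tight: every perfect matching contains exactly one of its edges. -/
def IsTightCut (G : SimpleGraph V) (X : Set V) : Prop :=
  ∀ M : G.Subgraph, M.IsPerfectMatching → (M.edgeSet ∩ cutEdges G X).ncard = 1

/-- A connected graph with at least one edge in which every edge lies in a perfect matching. -/
def MatchingCovered (G : SimpleGraph V) : Prop :=
  G.Connected ∧ G.edgeSet.Nonempty ∧
    ∀ e ∈ G.edgeSet, ∃ M : G.Subgraph, M.IsPerfectMatching ∧ e ∈ M.edgeSet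

/-- A brick: a non-bipartite matching covered graph with no nontrivial tight cut. -/
def IsBrick (G : SimpleGraph V) : Prop :=
  MatchingCovered G ∧ ¬ G.Colorable 2 ∧
    ∀ X : Set V, IsTightCut G X → IsTrivialShore X

/-- Two edges are mutually dependent if every perfect matching contains both or neither. -/
def MutuallyDependent (G : SimpleGraph V) (e f : Sym2 V) : Prop :=
  e ∈ G.edgeSet ∧ f ∈ G.edgeSet ∧
    ∀ M : G.Subgraph, M.IsPerfectMatching → (e ∈ M.edgeSet ↔ f ∈ M.edgeSet)

/-- An edge `e` of `G` is removable if `G − e` is matching covered. -/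
def Removable (G : SimpleGraph V) (e : Sym2 V) : Prop :=
  e ∈ G.edgeSet ∧ MatchingCovered (G.deleteEdges {e})

/-- `{e, f}` is a removable doubleton of `G`. -/
def RemovableDoubleton (G : SimpleGraph V) (e f : Sym2 V) : Prop :=
  e ∈ G.edgeSet ∧ f ∈ G.edgeSet ∧ e ≠ f ∧
    ¬ Removable G e ∧ ¬ Removable G f ∧ MatchingCovered (G.deleteEdges {e, f})

/-- A cubic graph: every vertex has degree 3. -/
def Cubic (G : SimpleGraph V) : Prop := ∀ v : V, (G.neighborSet v).ncard = 3

/-- A cubic graph is essentially 4-edge-connected if it is 2-edge-connected and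
every 3-cut is trivial. -/
def EssFourEdgeConnected (G : SimpleGraph V) : Prop :=
  (∀ X : Set V, X.Nonempty → Xᶜ.Nonempty → 2 ≤ (cutEdges G X).ncard) ∧
    ∀ X : Set V, (cutEdges G X).ncard = 3 → IsTrivialShore X

/-- A non-bipartite matching covered graph is near-bipartite if removing some pair of
edges yields a bipartite matching covered graph. -/
def NearBipartite (G : SimpleGraph V) : Prop :=
  MatchingCovered G ∧ ¬ G.Colorable 2 ∧
    ∃ e f : Sym2 V, e ∈ G.edgeSet ∧ f ∈ G.edgeSet ∧ e ≠ f ∧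
      (G.deleteEdges {e, f}).Colorable 2 ∧ MatchingCovered (G.deleteEdges {e, f})

/-- The set of edges of `G` joining a vertex of `X` to a vertex of `Y`. -/
def betweenEdges (G : SimpleGraph V) (X Y : Set V) : Set (Sym2 V) :=
  {e | e ∈ G.edgeSet ∧ ∃ x ∈ X, ∃ y ∈ Y, e = s(x, y)}

/-- subgraph determined by a fixed-point-free adjacency-respecting involution -/
def matchSub (G : SimpleGraph V) (f : V → V) (hadj : ∀ v, G.Adj v (f v))
    (hinv : ∀ v, f (f v) = v) : G.Subgraph where
  verts := Set.univ
  Adj u v := v = f u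
  adj_sub := by rintro u v rfl; exact hadj u
  edge_vert := fun _ => Set.mem_univ _
  symm := ⟨by rintro u v rfl; rw [hinv]⟩

lemma matchSub_isPM (G : SimpleGraph V) (f : V → V) (hadj : ∀ v, G.Adj v (f v))
    (hinv : ∀ v, f (f v) = v) : (matchSub G f hadj hinv).IsPerfectMatching :=
  ⟨fun v _ => ⟨f v, rfl, fun _ hw => hw⟩, fun _ => Set.mem_univ _⟩

lemma matchSub_mem_edgeSet (G : SimpleGraph V) (f : V → V) (hadj : ∀ v, G.Adj v (f v))
    (hinv : ∀ v, f (f v) = v) (a b : V) :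
    s(a, b) ∈ (matchSub G f hadj hinv).edgeSet ↔ b = f a := by
  rw [Subgraph.mem_edgeSet]; rfl

lemma matchSub_cut_count (G : SimpleGraph V) (f : V → V) (hadj : ∀ v, G.Adj v (f v))
    (hinv : ∀ v, f (f v) = v) (X : Set V) :
    ((matchSub G f hadj hinv).edgeSet ∩ cutEdges G X).ncard
      = {v | v ∈ X ∧ f v ∉ X}.ncard := by
  have hset : (matchSub G f hadj hinv).edgeSet ∩ cutEdges G X
      = (fun v => s(v, f v)) '' {v | v ∈ X ∧ f v ∉ X} := by
    ext e
    constructor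
    · rintro ⟨hM, hG, x, y, rfl, hx, hy⟩
      rw [matchSub_mem_edgeSet] at hM
      exact ⟨x, ⟨hx, by rwa [← hM]⟩, by rw [hM]⟩
    · rintro ⟨v, ⟨hv, hfv⟩, rfl⟩
      exact ⟨(matchSub_mem_edgeSet G f hadj hinv v (f v)).2 rfl,
        (SimpleGraph.mem_edgeSet G).2 (hadj v), v, f v, rfl, hv, hfv⟩
  rw [hset]
  apply Set.ncard_image_of_injOn
  rintro u ⟨hu, hfu⟩ w ⟨hw, hfw⟩ h
  rw [Sym2.eq_iff] at h
  rcases h with ⟨h1, _⟩ | ⟨h1, h2⟩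
  · exact h1
  · exact absurd (h2 ▸ hw) hfu


open Fin.CommRing Fin.NatCast

section FinHelpers

variable {n : ℕ} [NeZero n]

lemma fh_val_one (h2 : 2 ≤ n) : ((1 : Fin n)).val = 1 := by
  rw [Fin.val_one']; exact Nat.mod_eq_of_lt h2

lemma fh_add_one_val (h2 : 2 ≤ n) (a : Fin n) (h : a.val + 1 < n) :
    (a + 1).val = a.val + 1 := by
  rw [Fin.val_add, fh_val_one h2, Nat.mod_eq_of_lt h]

lemma fh_sub_val (a b : Fin n) : (a - b).val = (n - b.val + a.val) % n := by
  rw [Fin.sub_def]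

lemma fh_sub_one_val (h2 : 2 ≤ n) (a : Fin n) (h : 1 ≤ a.val) :
    (a - 1).val = a.val - 1 := by
  rw [fh_sub_val, fh_val_one h2]
  have hlt := a.isLt
  have : n - 1 + a.val = (a.val - 1) + n := by omega
  rw [this, Nat.add_mod_right, Nat.mod_eq_of_lt (by omega)]

lemma fh_one_ne_zero (h2 : 2 ≤ n) : (1 : Fin n) ≠ 0 := by
  intro h
  have := congrArg Fin.val h
  rw [fh_val_one h2] at this
  simp at this

lemma fh_succ_ne (h2 : 2 ≤ n) (a : Fin n) : a + 1 ≠ a := by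
  intro h
  have : (1 : Fin n) = 0 := by
    have := congrArg (· - a) h
    simpa [add_comm, add_sub_cancel_right, sub_self] using this
  exact fh_one_ne_zero h2 this

lemma fh_two_val (h3 : 3 ≤ n) : ((2 : Fin n)).val = 2 := by
  have : (2 : Fin n) = 1 + 1 := by norm_num
  rw [this, fh_add_one_val (by omega) 1 (by rw [fh_val_one (by omega)]; omega),
    fh_val_one (by omega)]

lemma fh_three_val (h4 : 4 ≤ n) : ((3 : Fin n)).val = 3 := by
  have : (3 : Fin n) = 2 + 1 := by norm_num
  rw [this, fh_add_one_val (by omega) 2 (by rw [fh_two_val (by omega)]; omega),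
    fh_two_val (by omega)]

lemma fh_two_ne_zero (h3 : 3 ≤ n) : (2 : Fin n) ≠ 0 := by
  intro h
  have := congrArg Fin.val h
  rw [fh_two_val h3] at this
  simp at this

/-- if a nonempty set of `Fin n` is closed under successor, it is everything -/
lemma fh_closure_succ {S : Set (Fin n)} (a : Fin n) (ha : a ∈ S)
    (h : ∀ i ∈ S, i + 1 ∈ S) : S = Set.univ := by
  have key : ∀ m : ℕ, a + (m : Fin n) ∈ S := by
    intro m
    induction m with
    | zero => simpa using ha
    | succ m ih =>
        have : a + ((m + 1 : ℕ) : Fin n) = (a + (m : Fin n)) + 1 := by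
          push_cast; ring
        rw [this]
        exact h _ ih
  ext b
  simp only [Set.mem_univ, iff_true]
  have := key ((b - a).val)
  rwa [Fin.cast_val_eq_self, add_sub_cancel] at this

lemma fh_closure_pred {S : Set (Fin n)} (a : Fin n) (ha : a ∈ S)
    (h : ∀ i ∈ S, i - 1 ∈ S) : S = Set.univ := by
  have key : ∀ m : ℕ, a - (m : Fin n) ∈ S := by
    intro m
    induction m with
    | zero => simpa using ha
    | succ m ih =>
        have : a - ((m + 1 : ℕ) : Fin n) = (a - (m : Fin n)) - 1 := by
          push_cast; ring
        rw [this]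
        exact h _ ih
  ext b
  simp only [Set.mem_univ, iff_true]
  have := key ((a - b).val)
  rwa [Fin.cast_val_eq_self, sub_sub_cancel] at this

lemma fh_exit_succ {S : Set (Fin n)} (hne : S.Nonempty) (hproper : S ≠ Set.univ) :
    ∃ i, i ∈ S ∧ i + 1 ∉ S := by
  by_contra h
  push_neg at h
  obtain ⟨a, ha⟩ := hne
  exact hproper (fh_closure_succ a ha h)

lemma fh_exit_pred {S : Set (Fin n)} (hne : S.Nonempty) (hproper : S ≠ Set.univ) :
    ∃ i, i ∈ S ∧ i - 1 ∉ S := by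
  by_contra h
  push_neg at h
  obtain ⟨a, ha⟩ := hne
  exact hproper (fh_closure_pred a ha h)

end FinHelpers

section Counting

lemma range_odd_card : ∀ m : ℕ, ((Finset.range m).filter (fun x => x % 2 = 1)).card = m / 2 := by
  intro m
  induction m with
  | zero => rfl
  | succ m ih =>
      rw [Finset.range_add_one, Finset.filter_insert]
      by_cases h : m % 2 = 1
      · rw [if_pos h, Finset.card_insert_of_notMem (by simp), ih]
        omega
      · rw [if_neg h, ih]
        omega

lemma range_even_card : ∀ m : ℕ, ((Finset.range m).filter (fun x => x % 2 = 0)).card = (m + 1) / 2 := by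
  intro m
  induction m with
  | zero => rfl
  | succ m ih =>
      rw [Finset.range_add_one, Finset.filter_insert]
      by_cases h : m % 2 = 0
      · rw [if_pos h, Finset.card_insert_of_notMem (by simp), ih]
        omega
      · rw [if_neg h, ih]
        omega

lemma fin_filter_card_eq_range (m : ℕ) (p : ℕ → Prop) [DecidablePred p] :
    (Finset.univ.filter (fun d : Fin m => p d.val)).card
      = ((Finset.range m).filter p).card := by
  apply Finset.card_nbij (fun d => d.val)
  · intro a ha
    simp only [Finset.mem_coe, Finset.mem_filter, Finset.mem_univ, true_and] at ha
    simp only [Finset.mem_coe, Finset.mem_filter, Finset.mem_range]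
    exact ⟨a.isLt, ha⟩
  · intro a _ b _ h
    exact Fin.ext h
  · intro b hb
    simp only [Finset.mem_coe, Finset.mem_filter, Finset.mem_range] at hb
    exact ⟨⟨b, hb.1⟩, by simp [hb.2], rfl⟩

lemma fin_odd_card (k : ℕ) :
    (Finset.univ.filter (fun d : Fin (2 * k + 1) => d.val % 2 = 1)).card = k := by
  rw [fin_filter_card_eq_range (2 * k + 1) (fun x => x % 2 = 1), range_odd_card]; omega

lemma fin_even_nz_card (k : ℕ) :
    ((Finset.univ.erase (0 : Fin (2 * k + 1))).filter (fun d => d.val % 2 = 0)).card = k := by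
  have h1 : ((Finset.univ.erase (0 : Fin (2 * k + 1))).filter (fun d => d.val % 2 = 0))
      = (Finset.univ.filter (fun d : Fin (2 * k + 1) => d.val % 2 = 0)).erase 0 := by
    ext d
    simp only [Finset.mem_filter, Finset.mem_erase, Finset.mem_univ, true_and, and_true]
    try tauto
  have h2 : (Finset.univ.filter (fun d : Fin (2 * k + 1) => d.val % 2 = 0)).card = k + 1 := by
    rw [fin_filter_card_eq_range (2 * k + 1) (fun x => x % 2 = 0), range_even_card]; omega
  rw [h1, Finset.card_erase_of_mem (by simp), h2]
  omega
end Counting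


section Main

open SimpleGraph

/-- the prism graph -/
abbrev PG (k : ℕ) : SimpleGraph (Fin (2 * k + 1) × Fin 2) :=
  (SimpleGraph.cycleGraph (2 * k + 1)).boxProd (⊤ : SimpleGraph (Fin 2))

lemma fin2_ne_iff : ∀ c d : Fin 2, c ≠ d ↔ d = c + 1 := by decide
lemma fin2_add_two : ∀ c : Fin 2, c + 1 + 1 = c := by decide
lemma fin2_succ_ne : ∀ c : Fin 2, c + 1 ≠ c := by decide
lemma fin2_two_color : ∀ a b c : Fin 2, a ≠ b → c ≠ b → a = c := by decide
lemma fin2_val_succ : ∀ c : Fin 2, ((c + 1 : Fin 2)).val = 1 - c.val := by decide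

variable {k : ℕ}

lemma cyc_adj (hk : 2 ≤ k) (a b : Fin (2 * k + 1)) :
    (cycleGraph (2 * k + 1)).Adj a b ↔ b = a + 1 ∨ b = a - 1 := by
  rw [cycleGraph_adj']
  constructor
  · rintro (h | h)
    · right
      have h1 : a - b = 1 := Fin.ext (by rw [h, fh_val_one (by omega)])
      linear_combination -h1
    · left
      have h1 : b - a = 1 := Fin.ext (by rw [h, fh_val_one (by omega)])
      linear_combination h1
  · rintro (rfl | rfl)
    · right
      have : a + 1 - a = 1 := by ring
      rw [this, fh_val_one (by omega)]
    · left
      have : a - (a - 1) = 1 := by ring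
      rw [this, fh_val_one (by omega)]

lemma pg_adj (hk : 2 ≤ k) (u v : Fin (2 * k + 1) × Fin 2) :
    (PG k).Adj u v ↔
      v = (u.1 + 1, u.2) ∨ v = (u.1 - 1, u.2) ∨ v = (u.1, u.2 + 1) := by
  rw [boxProd_adj, cyc_adj hk, top_adj]
  constructor
  · rintro (⟨h1 | h1, h2⟩ | ⟨h1, h2⟩)
    · exact Or.inl (Prod.ext h1 h2.symm)
    · exact Or.inr (Or.inl (Prod.ext h1 h2.symm))
    · refine Or.inr (Or.inr (Prod.ext h2.symm ?_))
      exact ((fin2_ne_iff u.2 v.2).1 h1)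
  · rintro (rfl | rfl | rfl)
    · exact Or.inl ⟨Or.inl rfl, rfl⟩
    · exact Or.inl ⟨Or.inr rfl, rfl⟩
    · exact Or.inr ⟨(fin2_succ_ne u.2).symm, rfl⟩

/-- the rung matching function -/
def fR (k : ℕ) (v : Fin (2 * k + 1) × Fin 2) : Fin (2 * k + 1) × Fin 2 := (v.1, v.2 + 1)

/-- the matching with a single rung at `t` -/
def fM (k : ℕ) (t : Fin (2 * k + 1)) (v : Fin (2 * k + 1) × Fin 2) :
    Fin (2 * k + 1) × Fin 2 :=
  if v.1 = t then (v.1, v.2 + 1)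
  else if (v.1 - t).val % 2 = 1 then (v.1 + 1, v.2) else (v.1 - 1, v.2)

lemma fR_adj (hk : 2 ≤ k) : ∀ v, (PG k).Adj v (fR k v) := by
  intro v
  rw [pg_adj hk]
  exact Or.inr (Or.inr rfl)

lemma fR_inv : ∀ v, fR k (fR k v) = v := by
  intro v
  simp only [fR, fin2_add_two]

lemma fM_adj (hk : 2 ≤ k) (t : Fin (2 * k + 1)) : ∀ v, (PG k).Adj v (fM k t v) := by
  intro v
  rw [pg_adj hk]
  unfold fM
  split_ifs
  · exact Or.inr (Or.inr rfl)
  · exact Or.inl rfl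
  · exact Or.inr (Or.inl rfl)

lemma fM_inv (hk : 2 ≤ k) (t : Fin (2 * k + 1)) : ∀ v, fM k t (fM k t v) = v := by
  intro v
  obtain ⟨i, c⟩ := v
  by_cases hit : i = t
  · subst hit
    simp [fM, fin2_add_two]
  · have hd0 : (i - t).val ≠ 0 := by
      intro h
      exact hit (by linear_combination (Fin.ext h : i - t = 0))
    have hdlt : (i - t).val < 2 * k + 1 := (i - t).isLt
    by_cases hd : (i - t).val % 2 = 1
    · -- up step
      have hne : (i - t).val ≠ 2 * k := by omega
      have hval : (i + 1 - t).val = (i - t).val + 1 := by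
        have h1 : i + 1 - t = (i - t) + 1 := by ring
        rw [h1, fh_add_one_val (by omega) _ (by omega)]
      have h1 : i + 1 ≠ t := by
        intro h
        have : i + 1 - t = 0 := by rw [h]; ring
        rw [this] at hval
        simp at hval
      have h2 : ¬ ((i + 1 - t).val % 2 = 1) := by omega
      simp only [fM, if_neg hit, if_pos hd, if_neg h1, if_neg h2]
      have : i + 1 - 1 = i := by ring
      rw [this]
    · -- down step
      have h1 : i - 1 ≠ t := by
        intro h
        have h2 : i - t = 1 := by linear_combination h
        rw [h2, fh_val_one (by omega)] at hd
        omega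
      have hval : (i - 1 - t).val = (i - t).val - 1 := by
        have h2 : i - 1 - t = (i - t) - 1 := by ring
        rw [h2, fh_sub_one_val (by omega) _ (by omega)]
      have h2 : (i - 1 - t).val % 2 = 1 := by omega
      simp only [fM, if_neg hit, if_neg hd, if_neg h1, if_pos h2]
      have : i - 1 + 1 = i := by ring
      rw [this]

/-- prism graphs are cubic -/
lemma pg_cubic (hk : 2 ≤ k) : ∀ v, ((PG k).neighborSet v).ncard = 3 := by
  intro u
  have hset : (PG k).neighborSet u
      = {(u.1 + 1, u.2), (u.1 - 1, u.2), (u.1, u.2 + 1)} := by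
    ext v
    rw [mem_neighborSet, pg_adj hk]
    simp [Set.mem_insert_iff]
  rw [hset, Set.ncard_eq_three]
  refine ⟨_, _, _, ?_, ?_, ?_, rfl⟩
  · intro h
    have h1 : (2 : Fin (2 * k + 1)) = 0 := by
      linear_combination congrArg Prod.fst h
    exact fh_two_ne_zero (by omega) h1
  · intro h
    exact fin2_succ_ne u.2 (congrArg Prod.snd h).symm
  · intro h
    exact fin2_succ_ne u.2 (congrArg Prod.snd h).symm

/-- prism graphs over odd cycles are not bipartite -/
lemma pg_not_bipartite (hk : 2 ≤ k) : ¬ (PG k).Colorable 2 := by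
  rintro ⟨C⟩
  set g : ℕ → Fin 2 := fun m => C ((m : Fin (2 * k + 1)), 0) with hg
  have hadj : ∀ m : ℕ, g (m + 1) ≠ g m := by
    intro m
    apply Ne.symm
    apply C.valid
    rw [pg_adj hk]
    left
    refine Prod.ext ?_ rfl
    push_cast
    rfl
  have h01 : g 1 ≠ g 0 := hadj 0
  have key : ∀ m : ℕ, g m = if m % 2 = 0 then g 0 else g 1 := by
    intro m
    induction m with
    | zero => simp
    | succ m ih =>
        by_cases h : m % 2 = 0
        · rw [if_neg (by omega)]
          rw [if_pos h] at ih
          exact fin2_two_color _ _ _ (ih ▸ hadj m) h01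
        · rw [if_pos (by omega)]
          rw [if_neg h] at ih
          exact fin2_two_color _ _ _ (ih ▸ hadj m) (Ne.symm h01)
  have hn : g (2 * k + 1) = g 0 := by
    rw [hg]
    simp only []
    congr 1
    refine Prod.ext ?_ rfl
    simp [Fin.natCast_self]
  rw [key (2 * k + 1), if_neg (by omega)] at hn
  exact h01 hn


section Cuts

variable {k : ℕ}

lemma ncard_ge_two {α : Type*} {S : Set α} (hS : S.Finite) {a b : α}
    (ha : a ∈ S) (hb : b ∈ S) (hab : a ≠ b) : 2 ≤ S.ncard := by
  calc 2 = ({a, b} : Set α).ncard := (Set.ncard_pair hab).symm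
  _ ≤ S.ncard := Set.ncard_le_ncard (by
      intro x hx
      rcases hx with rfl | hx
      · exact ha
      · rw [Set.mem_singleton_iff] at hx; subst hx; exact hb) hS

lemma ncard_ge_four {α : Type*} {S : Set α} (hS : S.Finite) {a b c d : α}
    (ha : a ∈ S) (hb : b ∈ S) (hc : c ∈ S) (hd : d ∈ S)
    (hab : a ≠ b) (hac : a ≠ c) (had : a ≠ d) (hbc : b ≠ c) (hbd : b ≠ d) (hcd : c ≠ d) :
    4 ≤ S.ncard := by
  have h4 : ({a, b, c, d} : Set α).ncard = 4 := by
    rw [Set.ncard_insert_of_notMem (by simp [hab, hac, had])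
        (((Set.finite_singleton d).insert c).insert b),
      Set.ncard_insert_of_notMem (by simp [hbc, hbd]) ((Set.finite_singleton d).insert c),
      Set.ncard_insert_of_notMem (by simp [hcd]) (Set.finite_singleton d),
      Set.ncard_singleton]
  calc 4 = ({a, b, c, d} : Set α).ncard := h4.symm
  _ ≤ S.ncard := Set.ncard_le_ncard (by
      intro x hx
      rcases hx with rfl | rfl | rfl | hx
      · exact ha
      · exact hb
      · exact hc
      · rw [Set.mem_singleton_iff] at hx; subst hx; exact hd) hS

lemma exists_pair_of_not_singleton {α : Type*} {X : Set α} (hne : X.Nonempty)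
    (h : ¬ ∃ v, X = {v}) : ∃ a b, a ∈ X ∧ b ∈ X ∧ a ≠ b := by
  obtain ⟨a, ha⟩ := hne
  by_contra h2
  push_neg at h2
  refine h ⟨a, ?_⟩
  ext x
  simp only [Set.mem_singleton_iff]
  constructor
  · intro hx
    by_contra hxa
    exact hxa (h2 x a hx ha)
  · rintro rfl; exact ha

-- cut edge producers
lemma cut_mem_up (hk : 2 ≤ k) {X : Set (Fin (2 * k + 1) × Fin 2)} {i : Fin (2 * k + 1)}
    {c : Fin 2} (h1 : (i, c) ∈ X) (h2 : (i + 1, c) ∉ X) :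
    s((i, c), (i + 1, c)) ∈ cutEdges (PG k) X := by
  refine ⟨?_, (i, c), (i + 1, c), rfl, h1, h2⟩
  rw [SimpleGraph.mem_edgeSet, pg_adj hk]
  exact Or.inl rfl

lemma cut_mem_down (hk : 2 ≤ k) {X : Set (Fin (2 * k + 1) × Fin 2)} {i : Fin (2 * k + 1)}
    {c : Fin 2} (h1 : (i, c) ∈ X) (h2 : (i - 1, c) ∉ X) :
    s((i, c), (i - 1, c)) ∈ cutEdges (PG k) X := by
  refine ⟨?_, (i, c), (i - 1, c), rfl, h1, h2⟩
  rw [SimpleGraph.mem_edgeSet, pg_adj hk]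
  exact Or.inr (Or.inl rfl)

lemma cut_mem_rung (hk : 2 ≤ k) {X : Set (Fin (2 * k + 1) × Fin 2)} {i : Fin (2 * k + 1)}
    {c : Fin 2} (h1 : (i, c) ∈ X) (h2 : (i, c + 1) ∉ X) :
    s((i, c), (i, c + 1)) ∈ cutEdges (PG k) X := by
  refine ⟨?_, (i, c), (i, c + 1), rfl, h1, h2⟩
  rw [SimpleGraph.mem_edgeSet, pg_adj hk]
  exact Or.inr (Or.inr rfl)

-- distinctness lemmas
lemma cyc_ne_of_snd {i i' j j' : Fin (2 * k + 1)} {c d : Fin 2} (h : c ≠ d) :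
    s((i, c), (i', c)) ≠ s((j, d), (j', d)) := by
  intro he
  rw [Sym2.eq_iff] at he
  rcases he with ⟨h1, _⟩ | ⟨h1, _⟩ <;> exact h (congrArg Prod.snd h1)

lemma cyc_ne_rung {i i' j : Fin (2 * k + 1)} {c d : Fin 2} :
    s((i, c), (i', c)) ≠ s((j, d), (j, d + 1)) := by
  intro he
  rw [Sym2.eq_iff] at he
  rcases he with ⟨h1, h2⟩ | ⟨h1, h2⟩
  · exact fin2_succ_ne d ((congrArg Prod.snd h2).symm.trans (congrArg Prod.snd h1))
  · exact fin2_succ_ne d ((congrArg Prod.snd h1).symm.trans (congrArg Prod.snd h2))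

lemma rung_ne_rung {i j : Fin (2 * k + 1)} {c d : Fin 2} (hij : i ≠ j) :
    s((i, c), (i, c + 1)) ≠ s((j, d), (j, d + 1)) := by
  intro he
  rw [Sym2.eq_iff] at he
  rcases he with ⟨h1, _⟩ | ⟨h1, _⟩ <;> exact hij (congrArg Prod.fst h1)

lemma up_ne_down (hk : 2 ≤ k) {P : Fin (2 * k + 1) → Prop} {i j : Fin (2 * k + 1)} {c : Fin 2}
    (hi : P i) (hj : ¬ P (j - 1)) :
    s((i, c), (i + 1, c)) ≠ s((j, c), (j - 1, c)) := by
  intro he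
  rw [Sym2.eq_iff] at he
  rcases he with ⟨h1, h2⟩ | ⟨h1, h2⟩
  · have hij : i = j := congrArg Prod.fst h1
    have h3 : i + 1 = j - 1 := congrArg Prod.fst h2
    rw [← hij] at h3
    have : (2 : Fin (2 * k + 1)) = 0 := by linear_combination h3
    exact fh_two_ne_zero (by omega) this
  · have hij : i = j - 1 := congrArg Prod.fst h1
    rw [hij] at hi
    exact hj hi

lemma pg_bdry (hk : 2 ≤ k) {X : Set (Fin (2 * k + 1) × Fin 2)} (c : Fin 2)
    (S : Set (Fin (2 * k + 1))) (hSdef : S = {i | (i, c) ∈ X})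
    (hne : S.Nonempty) (hproper : S ≠ Set.univ) :
    ∃ i j : Fin (2 * k + 1), s((i, c), (i + 1, c)) ∈ cutEdges (PG k) X ∧
      s((j, c), (j - 1, c)) ∈ cutEdges (PG k) X ∧
      s((i, c), (i + 1, c)) ≠ s((j, c), (j - 1, c)) := by
  obtain ⟨i, hiS, hi1⟩ := fh_exit_succ hne hproper
  obtain ⟨j, hjS, hj1⟩ := fh_exit_pred hne hproper
  rw [hSdef] at hiS hi1 hjS hj1
  exact ⟨i, j, cut_mem_up hk hiS hi1, cut_mem_down hk hjS hj1,
    up_ne_down hk (P := fun x => (x, c) ∈ X) hiS hj1⟩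

/-- every nontrivial cut in the prism has at least 4 edges -/
lemma pg_cut_ge_four (hk : 2 ≤ k) {X : Set (Fin (2 * k + 1) × Fin 2)}
    (hXne : X.Nonempty) (hXcne : Xᶜ.Nonempty) (hnt : ¬ IsTrivialShore X) :
    4 ≤ (cutEdges (PG k) X).ncard := by
  rw [IsTrivialShore, not_or] at hnt
  obtain ⟨hnt1, hnt2⟩ := hnt
  set S0 : Set (Fin (2 * k + 1)) := {i | (i, 0) ∈ X} with hS0
  set S1 : Set (Fin (2 * k + 1)) := {i | (i, 1) ∈ X} with hS1
  have hfin : (cutEdges (PG k) X).Finite := Set.toFinite _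
  -- produce 2 boundary cycle edges in copy c when S_c is proper and nonempty
  have hbdry := fun (c : Fin 2) (S : Set (Fin (2 * k + 1))) h1 h2 h3 =>
    pg_bdry hk (X := X) c S h1 h2 h3
  -- main case analysis
  by_cases h0e : S0 = ∅
  · by_cases h1e : S1 = ∅
    · -- X empty, contradiction
      exfalso
      obtain ⟨⟨i, c⟩, hv⟩ := hXne
      fin_cases c
      · have h : i ∈ S0 := hv
        rw [h0e] at h; exact h
      · have h : i ∈ S1 := hv
        rw [h1e] at h; exact h
    · by_cases h1u : S1 = Set.univ
      · -- X is exactly copy 1 : four rungs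
        have hmem : ∀ i : Fin (2 * k + 1), s((i, (1 : Fin 2)), (i, 1 + 1)) ∈ cutEdges (PG k) X := by
          intro i
          refine cut_mem_rung hk ?_ ?_
          · have : i ∈ S1 := h1u ▸ Set.mem_univ i
            exact this
          · show (i, (1 : Fin 2) + 1) ∉ X
            have h2 : ((1 : Fin 2) + 1) = 0 := by decide
            rw [h2]
            intro hmm
            have hmm2 : i ∈ S0 := hmm
            rw [h0e] at hmm2; exact hmm2
        have hd01 : (0 : Fin (2 * k + 1)) ≠ 1 := by
          intro h; have := congrArg Fin.val h; rw [fh_val_one (by omega)] at this; simp at this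
        have hd02 : (0 : Fin (2 * k + 1)) ≠ 2 := by
          intro h; have := congrArg Fin.val h; rw [fh_two_val (by omega)] at this; simp at this
        have hd03 : (0 : Fin (2 * k + 1)) ≠ 3 := by
          intro h; have := congrArg Fin.val h; rw [fh_three_val (by omega)] at this; simp at this
        have hd12 : (1 : Fin (2 * k + 1)) ≠ 2 := by
          intro h; have := congrArg Fin.val h
          rw [fh_val_one (by omega), fh_two_val (by omega)] at this; omega
        have hd13 : (1 : Fin (2 * k + 1)) ≠ 3 := by
          intro h; have := congrArg Fin.val h
          rw [fh_val_one (by omega), fh_three_val (by omega)] at this; omega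
        have hd23 : (2 : Fin (2 * k + 1)) ≠ 3 := by
          intro h; have := congrArg Fin.val h
          rw [fh_two_val (by omega), fh_three_val (by omega)] at this; omega
        exact ncard_ge_four hfin (hmem 0) (hmem 1) (hmem 2) (hmem 3)
          (rung_ne_rung hd01) (rung_ne_rung hd02) (rung_ne_rung hd03)
          (rung_ne_rung hd12) (rung_ne_rung hd13) (rung_ne_rung hd23)
      · -- X ⊆ copy 1, S1 proper nonempty : two rungs + two boundary edges
        have hS1ne : S1.Nonempty := by
          obtain ⟨⟨i, c⟩, hv⟩ := hXne
          fin_cases c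
          · exfalso; have : i ∈ S0 := hv; rw [h0e] at this; exact this
          · exact ⟨i, hv⟩
        -- two distinct elements of X, both in copy 1
        obtain ⟨a, b, ha, hb, hab⟩ := exists_pair_of_not_singleton hXne hnt1
        have hcopy : ∀ v : Fin (2 * k + 1) × Fin 2, v ∈ X → v.2 = 1 := by
          rintro ⟨i, c⟩ hv
          fin_cases c
          · exfalso; have : i ∈ S0 := hv; rw [h0e] at this; exact this
          · rfl
        have hab1 : a.1 ≠ b.1 := by
          intro h
          exact hab (Prod.ext h ((hcopy a ha).trans (hcopy b hb).symm))
        have hamem : s((a.1, (1 : Fin 2)), (a.1, 1 + 1)) ∈ cutEdges (PG k) X := by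
          refine cut_mem_rung hk ?_ ?_
          · have := hcopy a ha; rw [← this]; exact ha
          · show (a.1, (1 : Fin 2) + 1) ∉ X
            rw [show ((1 : Fin 2) + 1) = 0 by decide]
            intro hmm
            have : a.1 ∈ S0 := hmm
            rw [h0e] at this; exact this
        have hbmem : s((b.1, (1 : Fin 2)), (b.1, 1 + 1)) ∈ cutEdges (PG k) X := by
          refine cut_mem_rung hk ?_ ?_
          · have := hcopy b hb; rw [← this]; exact hb
          · show (b.1, (1 : Fin 2) + 1) ∉ X
            rw [show ((1 : Fin 2) + 1) = 0 by decide]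
            intro hmm
            have : b.1 ∈ S0 := hmm
            rw [h0e] at this; exact this
        obtain ⟨i, j, hie, hje, hij⟩ := hbdry 1 S1 rfl hS1ne h1u
        exact ncard_ge_four hfin hie hje hamem hbmem hij
          cyc_ne_rung cyc_ne_rung cyc_ne_rung cyc_ne_rung (rung_ne_rung hab1)
  · -- S0 nonempty
    have hS0ne : S0.Nonempty := Set.nonempty_iff_ne_empty.mpr h0e
    by_cases h0u : S0 = Set.univ
    · by_cases h1u : S1 = Set.univ
      · -- X = univ, contradiction with Xᶜ nonempty
        exfalso
        obtain ⟨⟨i, c⟩, hv⟩ := hXcne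
        fin_cases c
        · exact hv (show i ∈ S0 from h0u ▸ Set.mem_univ i)
        · exact hv (show i ∈ S1 from h1u ▸ Set.mem_univ i)
      · by_cases h1e : S1 = ∅
        · -- Xᶜ = copy 1 : four rungs
          have hmem : ∀ i : Fin (2 * k + 1),
              s((i, (0 : Fin 2)), (i, 0 + 1)) ∈ cutEdges (PG k) X := by
            intro i
            refine cut_mem_rung hk (show i ∈ S0 from h0u ▸ Set.mem_univ i) ?_
            show (i, (0 : Fin 2) + 1) ∉ X
            rw [show ((0 : Fin 2) + 1) = 1 by decide]
            intro hmm
            have hmm2 : i ∈ S1 := hmm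
            rw [h1e] at hmm2; exact hmm2
          have hd01 : (0 : Fin (2 * k + 1)) ≠ 1 := by
            intro h; have := congrArg Fin.val h; rw [fh_val_one (by omega)] at this; simp at this
          have hd02 : (0 : Fin (2 * k + 1)) ≠ 2 := by
            intro h; have := congrArg Fin.val h; rw [fh_two_val (by omega)] at this; simp at this
          have hd03 : (0 : Fin (2 * k + 1)) ≠ 3 := by
            intro h; have := congrArg Fin.val h; rw [fh_three_val (by omega)] at this; simp at this
          have hd12 : (1 : Fin (2 * k + 1)) ≠ 2 := by
            intro h; have := congrArg Fin.val h
            rw [fh_val_one (by omega), fh_two_val (by omega)] at this; omega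
          have hd13 : (1 : Fin (2 * k + 1)) ≠ 3 := by
            intro h; have := congrArg Fin.val h
            rw [fh_val_one (by omega), fh_three_val (by omega)] at this; omega
          have hd23 : (2 : Fin (2 * k + 1)) ≠ 3 := by
            intro h; have := congrArg Fin.val h
            rw [fh_two_val (by omega), fh_three_val (by omega)] at this; omega
          exact ncard_ge_four hfin (hmem 0) (hmem 1) (hmem 2) (hmem 3)
            (rung_ne_rung hd01) (rung_ne_rung hd02) (rung_ne_rung hd03)
            (rung_ne_rung hd12) (rung_ne_rung hd13) (rung_ne_rung hd23)
        · -- S0 = univ, S1 proper : Xᶜ ⊆ copy 1, two rungs + boundary of S1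
          have hS1ne : S1.Nonempty := Set.nonempty_iff_ne_empty.mpr h1e
          obtain ⟨a, b, ha, hb, hab⟩ := exists_pair_of_not_singleton hXcne hnt2
          have hcopy : ∀ v : Fin (2 * k + 1) × Fin 2, v ∈ Xᶜ → v.2 = 1 := by
            rintro ⟨i, c⟩ hv
            fin_cases c
            · exact absurd (show i ∈ S0 from h0u ▸ Set.mem_univ i) hv
            · rfl
          have hab1 : a.1 ≠ b.1 := by
            intro h
            exact hab (Prod.ext h ((hcopy a ha).trans (hcopy b hb).symm))
          have hamem : s((a.1, (0 : Fin 2)), (a.1, 0 + 1)) ∈ cutEdges (PG k) X := by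
            refine cut_mem_rung hk (show a.1 ∈ S0 from h0u ▸ Set.mem_univ a.1) ?_
            show (a.1, (0 : Fin 2) + 1) ∉ X
            rw [show ((0 : Fin 2) + 1) = 1 by decide]
            have := hcopy a ha
            intro hmm
            exact (show a ∈ Xᶜ from ha) (by rw [show a = (a.1, (1 : Fin 2)) from Prod.ext rfl this]; exact hmm)
          have hbmem : s((b.1, (0 : Fin 2)), (b.1, 0 + 1)) ∈ cutEdges (PG k) X := by
            refine cut_mem_rung hk (show b.1 ∈ S0 from h0u ▸ Set.mem_univ b.1) ?_
            show (b.1, (0 : Fin 2) + 1) ∉ X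
            rw [show ((0 : Fin 2) + 1) = 1 by decide]
            have := hcopy b hb
            intro hmm
            exact (show b ∈ Xᶜ from hb) (by rw [show b = (b.1, (1 : Fin 2)) from Prod.ext rfl this]; exact hmm)
          obtain ⟨i, j, hie, hje, hij⟩ := hbdry 1 S1 rfl hS1ne h1u
          exact ncard_ge_four hfin hie hje hamem hbmem hij
            cyc_ne_rung cyc_ne_rung cyc_ne_rung cyc_ne_rung (rung_ne_rung hab1)
    · -- S0 proper nonempty
      by_cases h1e : S1 = ∅
      · -- X ⊆ copy 0 : two rungs + boundary of S0
        obtain ⟨a, b, ha, hb, hab⟩ := exists_pair_of_not_singleton hXne hnt1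
        have hcopy : ∀ v : Fin (2 * k + 1) × Fin 2, v ∈ X → v.2 = 0 := by
          rintro ⟨i, c⟩ hv
          fin_cases c
          · rfl
          · exfalso
            have h : i ∈ S1 := hv
            rw [h1e] at h; exact h
        have hab1 : a.1 ≠ b.1 := by
          intro h
          exact hab (Prod.ext h ((hcopy a ha).trans (hcopy b hb).symm))
        have hamem : s((a.1, (0 : Fin 2)), (a.1, 0 + 1)) ∈ cutEdges (PG k) X := by
          refine cut_mem_rung hk ?_ ?_
          · have := hcopy a ha; rw [← this]; exact ha
          · show (a.1, (0 : Fin 2) + 1) ∉ X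
            rw [show ((0 : Fin 2) + 1) = 1 by decide]
            intro hmm
            have h : a.1 ∈ S1 := hmm
            rw [h1e] at h; exact h
        have hbmem : s((b.1, (0 : Fin 2)), (b.1, 0 + 1)) ∈ cutEdges (PG k) X := by
          refine cut_mem_rung hk ?_ ?_
          · have := hcopy b hb; rw [← this]; exact hb
          · show (b.1, (0 : Fin 2) + 1) ∉ X
            rw [show ((0 : Fin 2) + 1) = 1 by decide]
            intro hmm
            have h : b.1 ∈ S1 := hmm
            rw [h1e] at h; exact h
        obtain ⟨i, j, hie, hje, hij⟩ := hbdry 0 S0 rfl hS0ne h0u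
        exact ncard_ge_four hfin hie hje hamem hbmem hij
          cyc_ne_rung cyc_ne_rung cyc_ne_rung cyc_ne_rung (rung_ne_rung hab1)
      · by_cases h1u : S1 = Set.univ
        · -- S1 = univ, S0 proper : Xᶜ ⊆ copy 0
          obtain ⟨a, b, ha, hb, hab⟩ := exists_pair_of_not_singleton hXcne hnt2
          have hcopy : ∀ v : Fin (2 * k + 1) × Fin 2, v ∈ Xᶜ → v.2 = 0 := by
            rintro ⟨i, c⟩ hv
            fin_cases c
            · rfl
            · exact absurd (show i ∈ S1 from h1u ▸ Set.mem_univ i) hv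
          have hab1 : a.1 ≠ b.1 := by
            intro h
            exact hab (Prod.ext h ((hcopy a ha).trans (hcopy b hb).symm))
          have hamem : s((a.1, (1 : Fin 2)), (a.1, 1 + 1)) ∈ cutEdges (PG k) X := by
            refine cut_mem_rung hk (show a.1 ∈ S1 from h1u ▸ Set.mem_univ a.1) ?_
            show (a.1, (1 : Fin 2) + 1) ∉ X
            rw [show ((1 : Fin 2) + 1) = 0 by decide]
            have := hcopy a ha
            intro hmm
            exact (show a ∈ Xᶜ from ha) (by rw [show a = (a.1, (0 : Fin 2)) from Prod.ext rfl this]; exact hmm)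
          have hbmem : s((b.1, (1 : Fin 2)), (b.1, 1 + 1)) ∈ cutEdges (PG k) X := by
            refine cut_mem_rung hk (show b.1 ∈ S1 from h1u ▸ Set.mem_univ b.1) ?_
            show (b.1, (1 : Fin 2) + 1) ∉ X
            rw [show ((1 : Fin 2) + 1) = 0 by decide]
            have := hcopy b hb
            intro hmm
            exact (show b ∈ Xᶜ from hb) (by rw [show b = (b.1, (0 : Fin 2)) from Prod.ext rfl this]; exact hmm)
          obtain ⟨i, j, hie, hje, hij⟩ := hbdry 0 S0 rfl hS0ne h0u
          exact ncard_ge_four hfin hie hje hamem hbmem hij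
            cyc_ne_rung cyc_ne_rung cyc_ne_rung cyc_ne_rung (rung_ne_rung hab1)
        · -- both proper : two boundary edges in each copy
          have hS1ne : S1.Nonempty := Set.nonempty_iff_ne_empty.mpr h1e
          obtain ⟨i0, j0, h0a, h0b, h0ab⟩ := hbdry 0 S0 rfl hS0ne h0u
          obtain ⟨i1, j1, h1a, h1b, h1ab⟩ := hbdry 1 S1 rfl hS1ne h1u
          have hne01 : (0 : Fin 2) ≠ 1 := by decide
          exact ncard_ge_four hfin h0a h0b h1a h1b h0ab
            (cyc_ne_of_snd hne01) (cyc_ne_of_snd hne01)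
            (cyc_ne_of_snd hne01) (cyc_ne_of_snd hne01) h1ab

/-- the prism is 2-edge-connected -/
lemma pg_cut_ge_two (hk : 2 ≤ k) {X : Set (Fin (2 * k + 1) × Fin 2)}
    (hXne : X.Nonempty) (hXcne : Xᶜ.Nonempty) :
    2 ≤ (cutEdges (PG k) X).ncard := by
  have hfin : (cutEdges (PG k) X).Finite := Set.toFinite _
  set S0 : Set (Fin (2 * k + 1)) := {i | (i, 0) ∈ X} with hS0
  set S1 : Set (Fin (2 * k + 1)) := {i | (i, 1) ∈ X} with hS1
  by_cases h0e : S0 = ∅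
  · by_cases h1e : S1 = ∅
    · exfalso
      obtain ⟨⟨i, c⟩, hv⟩ := hXne
      fin_cases c
      · have h : i ∈ S0 := hv
        rw [h0e] at h; exact h
      · have h : i ∈ S1 := hv
        rw [h1e] at h; exact h
    · by_cases h1u : S1 = Set.univ
      · -- X = copy 1, two rungs
        have hmem : ∀ i : Fin (2 * k + 1),
            s((i, (1 : Fin 2)), (i, 1 + 1)) ∈ cutEdges (PG k) X := by
          intro i
          refine cut_mem_rung hk (show i ∈ S1 from h1u ▸ Set.mem_univ i) ?_
          show (i, (1 : Fin 2) + 1) ∉ X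
          rw [show ((1 : Fin 2) + 1) = 0 by decide]
          intro hmm
          have h : i ∈ S0 := hmm
          rw [h0e] at h; exact h
        have hd01 : (0 : Fin (2 * k + 1)) ≠ 1 := by
          intro h; have := congrArg Fin.val h; rw [fh_val_one (by omega)] at this; simp at this
        exact ncard_ge_two hfin (hmem 0) (hmem 1) (rung_ne_rung hd01)
      · obtain ⟨i, j, hie, hje, hij⟩ :=
          pg_bdry hk 1 S1 rfl (Set.nonempty_iff_ne_empty.mpr h1e) h1u
        exact ncard_ge_two hfin hie hje hij
  · by_cases h0u : S0 = Set.univ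
    · by_cases h1e : S1 = ∅
      · -- X = copy 0, two rungs
        have hmem : ∀ i : Fin (2 * k + 1),
            s((i, (0 : Fin 2)), (i, 0 + 1)) ∈ cutEdges (PG k) X := by
          intro i
          refine cut_mem_rung hk (show i ∈ S0 from h0u ▸ Set.mem_univ i) ?_
          show (i, (0 : Fin 2) + 1) ∉ X
          rw [show ((0 : Fin 2) + 1) = 1 by decide]
          intro hmm
          have h : i ∈ S1 := hmm
          rw [h1e] at h; exact h
        have hd01 : (0 : Fin (2 * k + 1)) ≠ 1 := by
          intro h; have := congrArg Fin.val h; rw [fh_val_one (by omega)] at this; simp at this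
        exact ncard_ge_two hfin (hmem 0) (hmem 1) (rung_ne_rung hd01)
      · by_cases h1u : S1 = Set.univ
        · exfalso
          obtain ⟨⟨i, c⟩, hv⟩ := hXcne
          fin_cases c
          · exact hv (show i ∈ S0 from h0u ▸ Set.mem_univ i)
          · exact hv (show i ∈ S1 from h1u ▸ Set.mem_univ i)
        · obtain ⟨i, j, hie, hje, hij⟩ :=
            pg_bdry hk 1 S1 rfl (Set.nonempty_iff_ne_empty.mpr h1e) h1u
          exact ncard_ge_two hfin hie hje hij
    · obtain ⟨i, j, hie, hje, hij⟩ :=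
        pg_bdry hk 0 S0 rfl (Set.nonempty_iff_ne_empty.mpr h0e) h0u
      exact ncard_ge_two hfin hie hje hij

lemma pg_ess4 (hk : 2 ≤ k) : EssFourEdgeConnected (PG k) := by
  constructor
  · intro X hne hcne
    exact pg_cut_ge_two hk hne hcne
  · intro X hcard
    by_contra hnt
    have h1 : X.Nonempty := by
      rcases Set.eq_empty_or_nonempty X with rfl | h
      · rw [show cutEdges (PG k) (∅ : Set (Fin (2 * k + 1) × Fin 2)) = ∅ by
          ext e; simp [cutEdges]] at hcard
        simp at hcard
      · exact h
    have h2 : Xᶜ.Nonempty := by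
      rcases Set.eq_empty_or_nonempty Xᶜ with he | h
      · rw [show cutEdges (PG k) X = ∅ by
          ext e
          simp only [cutEdges, Set.mem_setOf_eq, Set.mem_empty_iff_false, iff_false, not_and]
          rintro _ ⟨x, y, _, _, hy⟩
          exact hy (by
            have : y ∈ Xᶜ → False := by rw [he]; exact fun h => h
            by_contra hyy
            exact this hyy)] at hcard
        simp at hcard
      · exact h
    have := pg_cut_ge_four hk h1 h2 hnt
    omega

end Cuts

section MC

variable {k : ℕ}

lemma top2_connected : (⊤ : SimpleGraph (Fin 2)).Connected := by
  rw [SimpleGraph.connected_iff]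
  refine ⟨fun u v => ?_, inferInstance⟩
  by_cases h : u = v
  · exact h ▸ SimpleGraph.Reachable.refl u
  · exact SimpleGraph.Adj.reachable h

lemma pg_connected (hk : 2 ≤ k) : (PG k).Connected :=
  SimpleGraph.Connected.boxProd
    (SimpleGraph.cycleGraph_connected (n := 2 * k)) top2_connected

lemma pg_mc (hk : 2 ≤ k) : MatchingCovered (PG k) := by
  refine ⟨pg_connected hk, ?_, ?_⟩
  · exact ⟨s(((0 : Fin (2 * k + 1)), (0 : Fin 2)), fR k (0, 0)),
      (SimpleGraph.mem_edgeSet _).2 (fR_adj hk _)⟩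
  · intro e he
    induction e with
    | h u v =>
      rw [SimpleGraph.mem_edgeSet, pg_adj hk] at he
      rcases he with hv | hv | hv
      · -- cycle edge upward : use fM with t = u.1 - 1
        refine ⟨matchSub (PG k) (fM k (u.1 - 1)) (fM_adj hk _) (fM_inv hk _),
          matchSub_isPM _ _ _ _, ?_⟩
        rw [matchSub_mem_edgeSet]
        have hne : u.1 ≠ u.1 - 1 := by
          intro h
          have h1 : (1 : Fin (2 * k + 1)) = 0 := by linear_combination h
          exact fh_one_ne_zero (by omega) h1
        have hval : (u.1 - (u.1 - 1)).val % 2 = 1 := by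
          have h1 : u.1 - (u.1 - 1) = 1 := by ring
          rw [h1, fh_val_one (by omega)]
        rw [hv]
        simp only [fM, if_neg hne, if_pos hval]
      · -- cycle edge downward : swap and use fM with t = v.1 - 1
        refine ⟨matchSub (PG k) (fM k (v.1 - 1)) (fM_adj hk _) (fM_inv hk _),
          matchSub_isPM _ _ _ _, ?_⟩
        rw [Sym2.eq_swap, matchSub_mem_edgeSet]
        have hu : u = (v.1 + 1, v.2) := by
          rw [hv]
          refine Prod.ext ?_ rfl
          show u.1 = u.1 - 1 + 1
          ring
        have hne : v.1 ≠ v.1 - 1 := by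
          intro h
          have h1 : (1 : Fin (2 * k + 1)) = 0 := by linear_combination h
          exact fh_one_ne_zero (by omega) h1
        have hval : (v.1 - (v.1 - 1)).val % 2 = 1 := by
          have h1 : v.1 - (v.1 - 1) = 1 := by ring
          rw [h1, fh_val_one (by omega)]
        rw [hu]
        simp only [fM, if_neg hne, if_pos hval]
      · -- rung edge : use fR
        refine ⟨matchSub (PG k) (fR k) (fR_adj hk) fR_inv, matchSub_isPM _ _ _ _, ?_⟩
        rw [matchSub_mem_edgeSet, hv]
        rfl

/-- the two removed edges -/
abbrev E0 (k : ℕ) : Sym2 (Fin (2 * k + 1) × Fin 2) := s(((0 : Fin (2 * k + 1)), (0 : Fin 2)), (1, 0))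
abbrev E1 (k : ℕ) : Sym2 (Fin (2 * k + 1) × Fin 2) := s(((0 : Fin (2 * k + 1)), (1 : Fin 2)), (1, 1))

/-- the ladder graph -/
abbrev LG (k : ℕ) : SimpleGraph (Fin (2 * k + 1) × Fin 2) :=
  (PG k).deleteEdges {E0 k, E1 k}

lemma rung_ne_E (hk : 2 ≤ k) (i : Fin (2 * k + 1)) (c : Fin 2) :
    s((i, c), (i, c + 1)) ∉ ({E0 k, E1 k} : Set (Sym2 (Fin (2 * k + 1) × Fin 2))) := by
  intro hmem
  rw [Set.mem_insert_iff, Set.mem_singleton_iff] at hmem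
  rcases hmem with h | h
  · exact cyc_ne_rung h.symm
  · exact cyc_ne_rung h.symm

/-- a cycle edge `s((i,c),(i+1,c))` is deleted iff `i = 0` -/
lemma cycedge_mem_E_iff (hk : 2 ≤ k) (i : Fin (2 * k + 1)) (c : Fin 2) :
    s((i, c), (i + 1, c)) ∈ ({E0 k, E1 k} : Set (Sym2 (Fin (2 * k + 1) × Fin 2))) ↔ i = 0 := by
  have h2 : (2 : Fin (2 * k + 1)) ≠ 0 := fh_two_ne_zero (by omega)
  constructor
  · intro hmem
    rw [Set.mem_insert_iff, Set.mem_singleton_iff] at hmem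
    rcases hmem with h | h <;>
    · rw [Sym2.eq_iff] at h
      rcases h with ⟨h1, _⟩ | ⟨h1, h2'⟩
      · exact congrArg Prod.fst h1
      · exfalso
        have ha : i = 1 := congrArg Prod.fst h1
        have hb : i + 1 = 0 := congrArg Prod.fst h2'
        rw [ha] at hb
        exact h2 (by linear_combination hb)
  · rintro rfl
    fin_cases c
    · left
      show s(((0 : Fin (2 * k + 1)), (0 : Fin 2)), (0 + 1, 0)) = E0 k
      rw [zero_add]
    · right
      show s(((0 : Fin (2 * k + 1)), (1 : Fin 2)), (0 + 1, 1)) = E1 k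
      rw [zero_add]

lemma fR_adj' (hk : 2 ≤ k) : ∀ v, (LG k).Adj v (fR k v) := by
  intro v
  rw [SimpleGraph.deleteEdges_adj]
  exact ⟨fR_adj hk v, rung_ne_E hk v.1 v.2⟩

/-- the value of `(0 - t)` and `(1 - t)` -/
lemma fh_zero_sub_val (hk : 2 ≤ k) (t : Fin (2 * k + 1)) (ht : t ≠ 0) :
    ((0 : Fin (2 * k + 1)) - t).val = 2 * k + 1 - t.val := by
  rw [fh_sub_val]
  have h1 : t.val ≠ 0 := fun h => ht (Fin.ext h)
  have h2 : t.val < 2 * k + 1 := t.isLt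
  simp only [Fin.val_zero, add_zero]
  exact Nat.mod_eq_of_lt (by omega)

lemma fh_one_sub_val (hk : 2 ≤ k) (t : Fin (2 * k + 1)) (ht : 2 ≤ t.val) :
    ((1 : Fin (2 * k + 1)) - t).val = 2 * k + 2 - t.val := by
  rw [fh_sub_val, fh_val_one (by omega)]
  have h2 : t.val < 2 * k + 1 := t.isLt
  have h3 : 2 * k + 1 - t.val + 1 = 2 * k + 2 - t.val := by omega
  rw [h3]
  exact Nat.mod_eq_of_lt (by omega)

/-- for good `t`, the matching `fM t` avoids the deleted edges -/
lemma fM_adj' (hk : 2 ≤ k) (t : Fin (2 * k + 1)) (ht : t = 0 ∨ t.val % 2 = 1) :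
    ∀ v, (LG k).Adj v (fM k t v) := by
  intro v
  obtain ⟨i, c⟩ := v
  rw [SimpleGraph.deleteEdges_adj]
  refine ⟨fM_adj hk t (i, c), ?_⟩
  unfold fM
  dsimp only
  split_ifs with h1 h2
  · exact rung_ne_E hk i c
  · -- up edge s((i,c),(i+1,c)) : need i ≠ 0
    intro hmm
    rw [cycedge_mem_E_iff hk] at hmm
    subst hmm
    rcases ht with rfl | hodd
    · exact h1 rfl
    · have h0 : t ≠ 0 := fun h => h1 h.symm
      rw [fh_zero_sub_val hk t h0] at h2
      have := t.isLt
      omega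
  · -- down edge s((i,c),(i-1,c)) : need it to avoid E0, E1
    intro hmem
    rw [Set.mem_insert_iff, Set.mem_singleton_iff] at hmem
    have hi1 : i = 1 := by
      rcases hmem with h | h <;>
      · rw [Sym2.eq_iff] at h
        rcases h with ⟨ha, hb⟩ | ⟨ha, hb⟩
        · exfalso
          have ha' : i = 0 := congrArg Prod.fst ha
          have hb' : i - 1 = 1 := congrArg Prod.fst hb
          rw [ha'] at hb'
          exact fh_two_ne_zero (n := 2 * k + 1) (by omega) (by linear_combination -hb')
        · exact congrArg Prod.fst ha
    subst hi1
    rcases ht with rfl | hodd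
    · rw [sub_zero, fh_val_one (by omega)] at h2
      exact h2 rfl
    · have ht2 : 2 ≤ t.val := by
        have h0 : t.val ≠ 1 := by
          intro h
          exact h1 (Fin.ext (by rw [fh_val_one (by omega), h]))
        omega
      rw [fh_one_sub_val hk t ht2] at h2
      have := t.isLt
      omega

lemma lg_mc_edges (hk : 2 ≤ k) :
    ∀ e ∈ (LG k).edgeSet, ∃ M : (LG k).Subgraph, M.IsPerfectMatching ∧ e ∈ M.edgeSet := by
  intro e he
  induction e with
  | h u v =>
    rw [SimpleGraph.mem_edgeSet, SimpleGraph.deleteEdges_adj] at he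
    obtain ⟨hadj, hdel⟩ := he
    rw [pg_adj hk] at hadj
    have key : ∀ w z : Fin (2 * k + 1) × Fin 2, z = (w.1 + 1, w.2) →
        s(w, z) ∉ ({E0 k, E1 k} : Set (Sym2 (Fin (2 * k + 1) × Fin 2))) →
        ∃ M : (LG k).Subgraph, M.IsPerfectMatching ∧ s(w, z) ∈ M.edgeSet := by
      intro w z hz hdel'
      have hw0 : w.1 ≠ 0 := by
        intro h
        apply hdel'
        rw [hz]
        exact (cycedge_mem_E_iff hk w.1 w.2).2 h
      by_cases hpar : w.1.val % 2 = 1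
      · -- t = 0
        refine ⟨matchSub (LG k) (fM k 0) (fM_adj' hk 0 (Or.inl rfl)) (fM_inv hk 0),
          matchSub_isPM _ _ _ _, ?_⟩
        rw [matchSub_mem_edgeSet, hz]
        have hval : (w.1 - 0).val % 2 = 1 := by rw [sub_zero]; exact hpar
        simp only [fM, if_neg hw0, if_pos hval]
      · -- t = w.1 - 1
        have ht : (w.1 - 1).val % 2 = 1 := by
          rw [fh_sub_one_val (by omega) _ (by
            have : w.1.val ≠ 0 := fun h => hw0 (Fin.ext h)
            omega)]
          have : w.1.val ≠ 0 := fun h => hw0 (Fin.ext h)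
          omega
        refine ⟨matchSub (LG k) (fM k (w.1 - 1)) (fM_adj' hk _ (Or.inr ht)) (fM_inv hk _),
          matchSub_isPM _ _ _ _, ?_⟩
        rw [matchSub_mem_edgeSet, hz]
        have hne : w.1 ≠ w.1 - 1 := by
          intro h
          exact fh_one_ne_zero (n := 2 * k + 1) (by omega) (by linear_combination h)
        have hval : (w.1 - (w.1 - 1)).val % 2 = 1 := by
          have h1 : w.1 - (w.1 - 1) = 1 := by ring
          rw [h1, fh_val_one (by omega)]
        simp only [fM, if_neg hne, if_pos hval]
    rcases hadj with hv | hv | hv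
    · exact key u v hv hdel
    · have hu : u = (v.1 + 1, v.2) := by
        rw [hv]
        refine Prod.ext ?_ rfl
        show u.1 = u.1 - 1 + 1
        ring
      have hswap : s(u, v) = s(v, u) := Sym2.eq_swap
      rw [hswap] at hdel ⊢
      exact key v u hu hdel
    · refine ⟨matchSub (LG k) (fR k) (fR_adj' hk) fR_inv, matchSub_isPM _ _ _ _, ?_⟩
      rw [matchSub_mem_edgeSet, hv]
      rfl

end MC

section Ladder

variable {k : ℕ}

/-- parity value used for 2-coloring the ladder -/
def pval (k : ℕ) (v : Fin (2 * k + 1) × Fin 2) : ℕ :=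
  v.1.val + v.2.val + (if v.1 = 0 then 1 else 0)

/-- the 2-coloring of the ladder -/
def chi (k : ℕ) (v : Fin (2 * k + 1) × Fin 2) : Fin 2 :=
  if pval k v % 2 = 0 then 0 else 1

lemma chi_step (hk : 2 ≤ k) (w z : Fin (2 * k + 1) × Fin 2) (hz : z = (w.1 + 1, w.2))
    (hdel : s(w, z) ∉ ({E0 k, E1 k} : Set (Sym2 (Fin (2 * k + 1) × Fin 2)))) :
    pval k w % 2 ≠ pval k z % 2 := by
  have hw0 : w.1 ≠ 0 := by
    intro h
    exact hdel (by rw [hz]; exact (cycedge_mem_E_iff hk w.1 w.2).2 h)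
  by_cases hlast : w.1.val = 2 * k
  · have hz1 : z.1 = 0 := by
      rw [hz]
      exact Fin.ext (by
        rw [Fin.val_add, fh_val_one (by omega), hlast, Nat.mod_self]; simp)
    have e1 : pval k w = 2 * k + w.2.val := by
      unfold pval
      rw [if_neg hw0, hlast]
      omega
    have e2 : pval k z = w.2.val + 1 := by
      have hz2 : z.2 = w.2 := by rw [hz]
      unfold pval
      rw [if_pos hz1, hz1, hz2, Fin.val_zero]
      omega
    rw [e1, e2]
    omega
  · have hval : z.1.val = w.1.val + 1 := by
      rw [hz]
      exact fh_add_one_val (by omega) w.1 (by have := w.1.isLt; omega)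
    have hz1 : z.1 ≠ 0 := by
      intro h
      rw [h] at hval
      simp at hval
    have e1 : pval k w = w.1.val + w.2.val := by
      unfold pval
      rw [if_neg hw0]
      omega
    have e2 : pval k z = w.1.val + 1 + w.2.val := by
      have hz2 : z.2 = w.2 := by rw [hz]
      unfold pval
      rw [if_neg hz1, hval, hz2]
      omega
    rw [e1, e2]
    omega

lemma lg_colorable (hk : 2 ≤ k) : (LG k).Colorable 2 := by
  refine ⟨SimpleGraph.Coloring.mk (chi k) ?_⟩
  intro u v huv
  rw [SimpleGraph.deleteEdges_adj] at huv
  obtain ⟨hadj, hdel⟩ := huv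
  have hP : pval k u % 2 ≠ pval k v % 2 := by
    rw [pg_adj hk] at hadj
    rcases hadj with hv | hv | hv
    · exact chi_step hk u v hv hdel
    · have hu : u = (v.1 + 1, v.2) := by
        rw [hv]
        refine Prod.ext ?_ rfl
        show u.1 = u.1 - 1 + 1
        ring
      refine (chi_step hk v u hu ?_).symm
      rwa [show s(v, u) = s(u, v) from Sym2.eq_swap]
    · have h2 : v.2.val = 1 - u.2.val := by rw [hv]; exact fin2_val_succ u.2
      have h1 : v.1 = u.1 := by rw [hv]
      have hle : u.2.val < 2 := u.2.isLt
      unfold pval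
      rw [h1, h2]
      omega
  intro h
  unfold chi at h
  split_ifs at h with h1 h2
  · exact hP (h1.trans h2.symm)
  · exact absurd h (by decide)
  · exact absurd h (by decide)
  · have ha : pval k u % 2 < 2 := Nat.mod_lt _ (by omega)
    have hb : pval k v % 2 < 2 := Nat.mod_lt _ (by omega)
    omega

lemma lg_connected (hk : 2 ≤ k) : (LG k).Connected := by
  rw [SimpleGraph.connected_iff]
  refine ⟨?_, inferInstance⟩
  have reach0 : ∀ i : Fin (2 * k + 1), (LG k).Reachable (i, (0 : Fin 2)) (0, 0) := by
    have key : ∀ m : ℕ, ∀ i : Fin (2 * k + 1), 2 * k + 1 - i.val ≤ m →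
        (LG k).Reachable (i, (0 : Fin 2)) (0, 0) := by
      intro m
      induction m with
      | zero =>
          intro i h
          exact absurd h (by have := i.isLt; omega)
      | succ m ih =>
          intro i h
          by_cases hi0 : i = 0
          · exact hi0 ▸ SimpleGraph.Reachable.refl _
          · have hadjpg : (PG k).Adj (i, 0) (i + 1, 0) := by
              rw [pg_adj hk]; exact Or.inl rfl
            by_cases hlast : i.val = 2 * k
            · have hip : i + 1 = 0 := Fin.ext (by
                rw [Fin.val_add, fh_val_one (by omega), hlast, Nat.mod_self]; simp)
              have hadj : (LG k).Adj (i, 0) (0, 0) := by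
                rw [SimpleGraph.deleteEdges_adj]
                constructor
                · rw [← hip]; exact hadjpg
                · intro hmem
                  rw [Set.mem_insert_iff, Set.mem_singleton_iff] at hmem
                  rcases hmem with hm | hm
                  · rw [Sym2.eq_iff] at hm
                    rcases hm with ⟨ha, _⟩ | ⟨ha, hb⟩
                    · exact hi0 (congrArg Prod.fst ha)
                    · have : i = 1 := congrArg Prod.fst ha
                      rw [this, fh_val_one (by omega)] at hlast
                      omega
                  · exact cyc_ne_of_snd (by decide : (0 : Fin 2) ≠ 1) hm
              exact hadj.reachable
            · have hnd : s((i, (0 : Fin 2)), (i + 1, 0)) ∉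
                  ({E0 k, E1 k} : Set (Sym2 (Fin (2 * k + 1) × Fin 2))) := by
                intro hmem
                rw [cycedge_mem_E_iff hk] at hmem
                exact hi0 hmem
              have hadj : (LG k).Adj (i, 0) (i + 1, 0) := by
                rw [SimpleGraph.deleteEdges_adj]
                exact ⟨hadjpg, hnd⟩
              have hval : (i + 1).val = i.val + 1 :=
                fh_add_one_val (by omega) i (by have := i.isLt; omega)
              exact hadj.reachable.trans (ih (i + 1) (by omega))
    intro i
    exact key (2 * k + 1) i (by omega)
  have reach : ∀ v : Fin (2 * k + 1) × Fin 2, (LG k).Reachable v (0, 0) := by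
    rintro ⟨i, c⟩
    fin_cases c
    · exact reach0 i
    · have hadj : (LG k).Adj (i, 1) (i, 0) := by
        rw [SimpleGraph.deleteEdges_adj]
        constructor
        · rw [pg_adj hk]
          exact Or.inr (Or.inr (by rw [show ((1 : Fin 2) + 1) = 0 by decide]))
        · intro hmem
          have := rung_ne_E hk i 1
          rw [show ((1 : Fin 2) + 1) = 0 by decide] at this
          exact this hmem
      exact hadj.reachable.trans (reach0 i)
  intro u v
  exact (reach u).trans (reach v).symm

lemma lg_mc (hk : 2 ≤ k) : MatchingCovered (LG k) := by
  refine ⟨lg_connected hk, ?_, lg_mc_edges hk⟩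
  exact ⟨s(((0 : Fin (2 * k + 1)), (0 : Fin 2)), fR k (0, 0)),
    (SimpleGraph.mem_edgeSet _).2 (fR_adj' hk _)⟩

lemma pg_near_bipartite (hk : 2 ≤ k) : NearBipartite (PG k) := by
  refine ⟨pg_mc hk, pg_not_bipartite hk, E0 k, E1 k, ?_, ?_, ?_, lg_colorable hk, lg_mc hk⟩
  · rw [SimpleGraph.mem_edgeSet, pg_adj hk]
    exact Or.inl (Prod.ext (by rw [zero_add]) rfl)
  · rw [SimpleGraph.mem_edgeSet, pg_adj hk]
    exact Or.inl (Prod.ext (by rw [zero_add]) rfl)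
  · exact cyc_ne_of_snd (by decide : (0 : Fin 2) ≠ 1)

end Ladder

section Tight

variable {k : ℕ}

lemma ncard_eq_filter_card {α : Type*} [Fintype α] (p : α → Prop) [DecidablePred p] :
    {v | p v}.ncard = (Finset.univ.filter p).card := by
  rw [Set.ncard_eq_toFinset_card', Set.toFinset_setOf]

lemma count_odd_erase (hk : 2 ≤ k) (i : Fin (2 * k + 1)) :
    (((Finset.univ.erase i)).filter (fun t => ((i - t).val % 2 = 1))).card = k := by
  refine Eq.trans ?_ (fin_odd_card k)
  apply Finset.card_nbij' (fun t => i - t) (fun d => i - d)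
  · intro a ha
    rw [Finset.mem_coe, Finset.mem_filter] at ha
    simp only [Finset.mem_coe, Finset.mem_filter, Finset.mem_univ, true_and]
    exact ha.2
  · intro d hd
    simp only [Finset.mem_coe, Finset.mem_filter, Finset.mem_univ, true_and] at hd
    simp only [Finset.mem_coe]
    rw [Finset.mem_filter, Finset.mem_erase]
    have hd0 : d ≠ 0 := by
      intro h
      rw [h] at hd
      simp at hd
    refine ⟨⟨?_, Finset.mem_univ _⟩, ?_⟩
    · intro h
      exact hd0 (by rwa [sub_eq_self] at h)
    · rwa [sub_sub_cancel]
  · intro a _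
    exact sub_sub_cancel _ _
  · intro d _
    exact sub_sub_cancel _ _

lemma count_even_erase (hk : 2 ≤ k) (i : Fin (2 * k + 1)) :
    (((Finset.univ.erase i)).filter (fun t => ¬((i - t).val % 2 = 1))).card = k := by
  refine Eq.trans ?_ (fin_even_nz_card k)
  apply Finset.card_nbij' (fun t => i - t) (fun d => i - d)
  · intro a ha
    rw [Finset.mem_coe, Finset.mem_filter, Finset.mem_erase] at ha
    simp only [Finset.mem_coe]
    rw [Finset.mem_filter, Finset.mem_erase]
    refine ⟨⟨?_, Finset.mem_univ _⟩, by omega⟩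
    intro h
    rw [sub_eq_zero] at h
    exact ha.1.1 (by rw [h])
  · intro d hd
    rw [Finset.mem_coe, Finset.mem_filter, Finset.mem_erase] at hd
    simp only [Finset.mem_coe]
    rw [Finset.mem_filter, Finset.mem_erase]
    refine ⟨⟨?_, Finset.mem_univ _⟩, ?_⟩
    · intro h
      exact hd.1.1 (by rwa [sub_eq_self] at h)
    · rw [sub_sub_cancel]
      omega
  · intro a _
    exact sub_sub_cancel _ _
  · intro d _
    exact sub_sub_cancel _ _

lemma pg_tight (hk : 2 ≤ k) (X : Set (Fin (2 * k + 1) × Fin 2))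
    (ht : IsTightCut (PG k) X) : IsTrivialShore X := by
  classical
  have hR : {v | v ∈ X ∧ fR k v ∉ X}.ncard = 1 := by
    have := ht (matchSub (PG k) (fR k) (fR_adj hk) fR_inv)
      (matchSub_isPM (PG k) (fR k) (fR_adj hk) fR_inv)
    rwa [matchSub_cut_count] at this
  obtain ⟨w, hw⟩ := Set.ncard_eq_one.mp hR
  set S0 : Set (Fin (2 * k + 1)) := {i | (i, 0) ∈ X} with hS0
  set S1 : Set (Fin (2 * k + 1)) := {i | (i, 1) ∈ X} with hS1
  by_cases h0e : S0 = ∅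
  · -- X ⊆ copy 1: X = {w}
    left
    refine ⟨w, ?_⟩
    rw [← hw]
    ext v
    simp only [Set.mem_setOf_eq]
    constructor
    · intro hv
      refine ⟨hv, ?_⟩
      obtain ⟨i, c⟩ := v
      fin_cases c
      · exfalso
        have h : i ∈ S0 := hv
        rw [h0e] at h; exact h
      · show (i, (1 : Fin 2) + 1) ∉ X
        rw [show ((1 : Fin 2) + 1) = 0 by decide]
        intro hmm
        have h : i ∈ S0 := hmm
        rw [h0e] at h; exact h
    · exact fun h => h.1
  · by_cases h1e : S1 = ∅
    · left
      refine ⟨w, ?_⟩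
      rw [← hw]
      ext v
      simp only [Set.mem_setOf_eq]
      constructor
      · intro hv
        refine ⟨hv, ?_⟩
        obtain ⟨i, c⟩ := v
        fin_cases c
        · show (i, (0 : Fin 2) + 1) ∉ X
          rw [show ((0 : Fin 2) + 1) = 1 by decide]
          intro hmm
          have h : i ∈ S1 := hmm
          rw [h1e] at h; exact h
        · exfalso
          have h : i ∈ S1 := hv
          rw [h1e] at h; exact h
      · exact fun h => h.1
    · have hXcne : Xᶜ.Nonempty := by
        by_contra hc
        rw [Set.not_nonempty_iff_eq_empty, ← Set.compl_univ, compl_inj_iff] at hc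
        have hwmem : w ∈ {v | v ∈ X ∧ fR k v ∉ X} := by rw [hw]; rfl
        exact hwmem.2 (by rw [hc]; exact Set.mem_univ _)
      by_cases h0u : S0 = Set.univ
      · -- Xᶜ is the singleton (w.1, w.2 + 1)
        right
        refine ⟨(w.1, w.2 + 1), ?_⟩
        have hsub : Xᶜ ⊆ {(w.1, w.2 + 1)} := by
          rintro ⟨i, c⟩ hv
          fin_cases c
          · exact absurd (show i ∈ S0 from h0u ▸ Set.mem_univ i) hv
          · have h0 : (i, (0 : Fin 2)) ∈ X := show i ∈ S0 from h0u ▸ Set.mem_univ i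
            have hmem : ((i, (0 : Fin 2)) : Fin (2 * k + 1) × Fin 2)
                ∈ {v | v ∈ X ∧ fR k v ∉ X} := by
              refine ⟨h0, ?_⟩
              show (i, (0 : Fin 2) + 1) ∉ X
              rw [show ((0 : Fin 2) + 1) = 1 by decide]
              exact hv
            rw [hw, Set.mem_singleton_iff] at hmem
            rw [Set.mem_singleton_iff, ← hmem]
            exact Prod.ext rfl rfl
        obtain ⟨x, hx⟩ := hXcne
        have hxw := hsub hx
        rw [Set.mem_singleton_iff] at hxw
        apply Set.Subset.antisymm hsub
        intro y hy
        rw [Set.mem_singleton_iff] at hy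
        rw [hy, ← hxw]
        exact hx
      · by_cases h1u : S1 = Set.univ
        · right
          refine ⟨(w.1, w.2 + 1), ?_⟩
          have hsub : Xᶜ ⊆ {(w.1, w.2 + 1)} := by
            rintro ⟨i, c⟩ hv
            fin_cases c
            · have h0 : (i, (1 : Fin 2)) ∈ X := show i ∈ S1 from h1u ▸ Set.mem_univ i
              have hmem : ((i, (1 : Fin 2)) : Fin (2 * k + 1) × Fin 2)
                  ∈ {v | v ∈ X ∧ fR k v ∉ X} := by
                refine ⟨h0, ?_⟩
                show (i, (1 : Fin 2) + 1) ∉ X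
                rw [show ((1 : Fin 2) + 1) = 0 by decide]
                exact hv
              rw [hw, Set.mem_singleton_iff] at hmem
              rw [Set.mem_singleton_iff, ← hmem]
              exact Prod.ext rfl rfl
            · exact absurd (show i ∈ S1 from h1u ▸ Set.mem_univ i) hv
          obtain ⟨x, hx⟩ := hXcne
          have hxw := hsub hx
          rw [Set.mem_singleton_iff] at hxw
          apply Set.Subset.antisymm hsub
          intro y hy
          rw [Set.mem_singleton_iff] at hy
          rw [hy, ← hxw]
          exact hx
        · -- both S0, S1 proper nonempty : contradiction via double counting
          exfalso
          have hM : ∀ t, {v | v ∈ X ∧ fM k t v ∉ X}.ncard = 1 := by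
            intro t
            have := ht (matchSub (PG k) (fM k t) (fM_adj hk t) (fM_inv hk t))
              (matchSub_isPM (PG k) (fM k t) (fM_adj hk t) (fM_inv hk t))
            rwa [matchSub_cut_count] at this
          -- counting
          have hinner : ∀ v : Fin (2 * k + 1) × Fin 2,
              (∑ t : Fin (2 * k + 1), if v ∈ X ∧ fM k t v ∉ X then 1 else 0)
              = (if v ∈ X ∧ fR k v ∉ X then 1 else 0)
                + k * ((if v ∈ X ∧ (v.1 + 1, v.2) ∉ X then 1 else 0)
                  + (if v ∈ X ∧ (v.1 - 1, v.2) ∉ X then 1 else 0)) := by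
            rintro ⟨i, c⟩
            rw [← Finset.add_sum_erase _ _ (Finset.mem_univ i)]
            have hfi : fM k i (i, c) = fR k (i, c) := by simp [fM, fR]
            rw [hfi]
            congr 1
            have hcongr : ∀ t ∈ Finset.univ.erase i,
                (if (i, c) ∈ X ∧ fM k t (i, c) ∉ X then (1 : ℕ) else 0)
                = (if (i - t).val % 2 = 1
                    then (if (i, c) ∈ X ∧ (i + 1, c) ∉ X then 1 else 0)
                    else (if (i, c) ∈ X ∧ (i - 1, c) ∉ X then 1 else 0)) := by
              intro t htm
              rw [Finset.mem_erase] at htm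
              have hit : ¬ (i = t) := fun h => htm.1 h.symm
              by_cases hpar : (i - t).val % 2 = 1
              · rw [if_pos hpar]
                have : fM k t (i, c) = (i + 1, c) := by
                  simp [fM, hit, hpar]
                rw [this]
              · rw [if_neg hpar]
                have : fM k t (i, c) = (i - 1, c) := by
                  simp [fM, hit, hpar]
                rw [this]
            rw [Finset.sum_congr rfl hcongr, Finset.sum_ite, Finset.sum_const,
              Finset.sum_const, count_odd_erase hk i, count_even_erase hk i,
              smul_eq_mul, smul_eq_mul, Nat.mul_add]
          have htot : (∑ t : Fin (2 * k + 1),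
              (Finset.univ.filter (fun v => v ∈ X ∧ fM k t v ∉ X)).card) = 2 * k + 1 := by
            have : ∀ t : Fin (2 * k + 1),
                (Finset.univ.filter (fun v => v ∈ X ∧ fM k t v ∉ X)).card = 1 := by
              intro t
              rw [← ncard_eq_filter_card]
              exact hM t
            rw [Finset.sum_congr rfl (fun t _ => this t)]
            simp
          rw [show (∑ t : Fin (2 * k + 1),
              (Finset.univ.filter (fun v => v ∈ X ∧ fM k t v ∉ X)).card)
            = ∑ t : Fin (2 * k + 1), ∑ v : Fin (2 * k + 1) × Fin 2,
                if v ∈ X ∧ fM k t v ∉ X then 1 else 0 from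
            Finset.sum_congr rfl (fun t _ => Finset.card_filter _ _)] at htot
          rw [Finset.sum_comm] at htot
          rw [Finset.sum_congr rfl (fun v _ => hinner v)] at htot
          rw [Finset.sum_add_distrib, ← Finset.mul_sum] at htot
          have hrung : (∑ v : Fin (2 * k + 1) × Fin 2,
              if v ∈ X ∧ fR k v ∉ X then 1 else 0) = 1 := by
            rw [← Finset.card_filter, ← ncard_eq_filter_card]
            exact hR
          rw [hrung] at htot
          -- htot : 1 + k * B = 2k+1 where B is the up/down boundary count
          set B := ∑ v : Fin (2 * k + 1) × Fin 2,
            ((if v ∈ X ∧ (v.1 + 1, v.2) ∉ X then 1 else 0)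
              + (if v ∈ X ∧ (v.1 - 1, v.2) ∉ X then 1 else 0)) with hB
          have hB2 : B = 2 := by
            have : k * B = k * 2 := by omega
            exact Nat.eq_of_mul_eq_mul_left (by omega) this
          -- but B ≥ 4 since both S0 and S1 are proper nonempty
          have hBsplit : B = (Finset.univ.filter
              (fun v : Fin (2 * k + 1) × Fin 2 => v ∈ X ∧ (v.1 + 1, v.2) ∉ X)).card
            + (Finset.univ.filter
              (fun v : Fin (2 * k + 1) × Fin 2 => v ∈ X ∧ (v.1 - 1, v.2) ∉ X)).card := by
            rw [hB, Finset.sum_add_distrib, Finset.card_filter, Finset.card_filter]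
          obtain ⟨i0, hi0S, hi0n⟩ := fh_exit_succ (Set.nonempty_iff_ne_empty.mpr h0e) h0u
          obtain ⟨i1, hi1S, hi1n⟩ := fh_exit_succ (Set.nonempty_iff_ne_empty.mpr h1e) h1u
          obtain ⟨j0, hj0S, hj0n⟩ := fh_exit_pred (Set.nonempty_iff_ne_empty.mpr h0e) h0u
          obtain ⟨j1, hj1S, hj1n⟩ := fh_exit_pred (Set.nonempty_iff_ne_empty.mpr h1e) h1u
          have hU : 2 ≤ (Finset.univ.filter
              (fun v : Fin (2 * k + 1) × Fin 2 => v ∈ X ∧ (v.1 + 1, v.2) ∉ X)).card := by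
            apply Finset.one_lt_card.mpr
            refine ⟨(i0, 0), Finset.mem_filter.mpr ⟨Finset.mem_univ _, hi0S, hi0n⟩,
              (i1, 1), Finset.mem_filter.mpr ⟨Finset.mem_univ _, hi1S, hi1n⟩, ?_⟩
            intro h
            have h2 : (0 : Fin 2) = 1 := congrArg Prod.snd h
            exact absurd h2 (by decide)
          have hW : 2 ≤ (Finset.univ.filter
              (fun v : Fin (2 * k + 1) × Fin 2 => v ∈ X ∧ (v.1 - 1, v.2) ∉ X)).card := by
            apply Finset.one_lt_card.mpr
            refine ⟨(j0, 0), Finset.mem_filter.mpr ⟨Finset.mem_univ _, hj0S, hj0n⟩,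
              (j1, 1), Finset.mem_filter.mpr ⟨Finset.mem_univ _, hj1S, hj1n⟩, ?_⟩
            intro h
            have h2 : (0 : Fin 2) = 1 := congrArg Prod.snd h
            exact absurd h2 (by decide)
          omega

end Tight

end Main

/-- For every integer `k ≥ 2`, the prism of order `4k + 2`, i.e. the
Cartesian product `C_{2k+1} □ K₂`, is an essentially 4-edge-connected cubic
near-bipartite brick. -/
theorem stmt14 (k : ℕ) (hk : 2 ≤ k) :
    Cubic (SimpleGraph.boxProd (SimpleGraph.cycleGraph (2 * k + 1))
        (⊤ : SimpleGraph (Fin 2))) ∧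
    EssFourEdgeConnected (SimpleGraph.boxProd (SimpleGraph.cycleGraph (2 * k + 1))
        (⊤ : SimpleGraph (Fin 2))) ∧
    NearBipartite (SimpleGraph.boxProd (SimpleGraph.cycleGraph (2 * k + 1))
        (⊤ : SimpleGraph (Fin 2))) ∧
    IsBrick (SimpleGraph.boxProd (SimpleGraph.cycleGraph (2 * k + 1))
        (⊤ : SimpleGraph (Fin 2))) := by
  exact ⟨pg_cubic hk, pg_ess4 hk, pg_near_bipartite hk, pg_mc hk, pg_not_bipartite hk,
    fun X hX => pg_tight hk X hX⟩

end Paper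
end

section
/- For every integer k ≥ 2, the Möbius ladder of order 4k (i.e., the circulant graph on Z_{4k} with connection set {1, −1, 2k}) is an essentially 4-edge-connected cubic near-bipartite brick. -/
namespace Paper

open SimpleGraph

variable {V : Type*}

/-- The Möbius ladder graph as in the statement. -/
def mlG (k : ℕ) : SimpleGraph (ZMod (4 * k)) :=
  SimpleGraph.circulantGraph ({1, -1, ((2 * k : ℕ) : ZMod (4 * k))} : Set (ZMod (4 * k)))

section Basic
variable {k : ℕ} (hk : 2 ≤ k)

lemma ml_neZero (hk : 2 ≤ k) : NeZero (4 * k) := ⟨by omega⟩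

lemma ml_cast_eq_iff (hk : 2 ≤ k) {m m' : ℕ} (hm : m < 4 * k) (hm' : m' < 4 * k) :
    ((m : ℕ) : ZMod (4 * k)) = ((m' : ℕ) : ZMod (4 * k)) ↔ m = m' := by
  rw [ZMod.natCast_eq_natCast_iff', Nat.mod_eq_of_lt hm, Nat.mod_eq_of_lt hm']

lemma ml_cast_eq_zero_iff (hk : 2 ≤ k) {m : ℕ} (hm : m < 4 * k) :
    ((m : ℕ) : ZMod (4 * k)) = 0 ↔ m = 0 := by
  rw [ZMod.natCast_eq_zero_iff]
  constructor
  · intro h; exact Nat.eq_zero_of_dvd_of_lt h hm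
  · rintro rfl; simp

lemma ml_two_ne_zero (hk : 2 ≤ k) : (2 : ZMod (4 * k)) ≠ 0 := by
  have := (ml_cast_eq_zero_iff hk (m := 2) (by omega))
  simpa using this.not.mpr (by omega)

lemma ml_one_ne_zero (hk : 2 ≤ k) : (1 : ZMod (4 * k)) ≠ 0 := by
  have := (ml_cast_eq_zero_iff hk (m := 1) (by omega))
  simpa using this.not.mpr (by omega)

lemma ml_c_ne_zero (hk : 2 ≤ k) : ((2 * k : ℕ) : ZMod (4 * k)) ≠ 0 := by
  exact (ml_cast_eq_zero_iff hk (by omega)).not.mpr (by omega)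

lemma ml_c_add_c (hk : 2 ≤ k) : ((2 * k : ℕ) : ZMod (4 * k)) + ((2 * k : ℕ) : ZMod (4 * k)) = 0 := by
  rw [← Nat.cast_add]
  have : (2 * k + 2 * k) = 4 * k := by omega
  rw [this, ZMod.natCast_self]

lemma ml_neg_c (hk : 2 ≤ k) : -((2 * k : ℕ) : ZMod (4 * k)) = ((2 * k : ℕ) : ZMod (4 * k)) := by
  exact neg_eq_of_add_eq_zero_left (ml_c_add_c hk)

lemma ml_c_ne_one (hk : 2 ≤ k) : ((2 * k : ℕ) : ZMod (4 * k)) ≠ 1 := by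
  have : ((1:ℕ) : ZMod (4*k)) = (1 : ZMod (4*k)) := by push_cast; ring
  rw [← this]
  exact (ml_cast_eq_iff hk (by omega) (by omega)).not.mpr (by omega)

lemma ml_c_ne_neg_one (hk : 2 ≤ k) : ((2 * k : ℕ) : ZMod (4 * k)) ≠ -1 := by
  intro h
  have h2 : ((2 * k : ℕ) : ZMod (4 * k)) + 1 = 0 := by rw [h]; ring
  have : ((2 * k + 1 : ℕ) : ZMod (4 * k)) = 0 := by push_cast; simpa using h2
  exact absurd ((ml_cast_eq_zero_iff hk (by omega)).mp this) (by omega)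

/-- Adjacency characterization. -/
lemma ml_adj_iff (hk : 2 ≤ k) {u v : ZMod (4 * k)} :
    (mlG k).Adj u v ↔ (v = u + 1 ∨ u = v + 1 ∨ v = u + ((2 * k : ℕ) : ZMod (4 * k))) := by
  have hc0 := ml_c_ne_zero hk
  have hnegc := ml_neg_c hk
  constructor
  · rintro ⟨hne, h | h⟩ <;>
      simp only [Set.mem_insert_iff, Set.mem_singleton_iff] at h
    · rcases h with h | h | h
      · exact Or.inr (Or.inl (by linear_combination h))
      · exact Or.inl (by linear_combination -h)
      · refine Or.inr (Or.inr ?_); linear_combination -h + hnegc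
    · rcases h with h | h | h
      · exact Or.inl (by linear_combination h)
      · exact Or.inr (Or.inl (by linear_combination -h))
      · exact Or.inr (Or.inr (by linear_combination h))
  · intro h
    have hne : u ≠ v := by
      rcases h with h | h | h
      · intro he; rw [← he] at h; exact ml_one_ne_zero hk (by linear_combination -h)
      · intro he; rw [← he] at h; exact ml_one_ne_zero hk (by linear_combination -h)
      · intro he; rw [← he] at h; exact hc0 (by linear_combination -h)
    refine ⟨hne, ?_⟩
    simp only [Set.mem_insert_iff, Set.mem_singleton_iff]
    rcases h with h | h | h
    · exact Or.inr (Or.inl (by linear_combination h))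
    · exact Or.inl (Or.inl (by linear_combination h))
    · exact Or.inr (Or.inr (Or.inr (by linear_combination h)))

end Basic

section Two
variable {k : ℕ}

local notation "C" => ((2 * k : ℕ) : ZMod (4 * k))

lemma ml_cubic (hk : 2 ≤ k) : Cubic (mlG k) := by
  intro v
  have hset : (mlG k).neighborSet v = {v + 1, v - 1, v + C} := by
    ext w
    simp only [mem_neighborSet, ml_adj_iff hk, Set.mem_insert_iff, Set.mem_singleton_iff]
    constructor
    · rintro (h | h | h)
      · exact Or.inl h
      · exact Or.inr (Or.inl (by linear_combination -h))
      · exact Or.inr (Or.inr h)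
    · rintro (h | h | h)
      · exact Or.inl h
      · exact Or.inr (Or.inl (by linear_combination -h))
      · exact Or.inr (Or.inr h)
  rw [hset, Set.ncard_eq_three]
  refine ⟨v + 1, v - 1, v + C, ?_, ?_, ?_, rfl⟩
  · intro h; exact ml_two_ne_zero hk (by linear_combination h)
  · intro h; exact ml_c_ne_one hk (by linear_combination -h)
  · intro h; exact ml_c_ne_neg_one hk (by linear_combination -h)

lemma ml_edge_cases (hk : 2 ≤ k) {e : Sym2 (ZMod (4 * k))} (he : e ∈ (mlG k).edgeSet) :
    (∃ v, e = s(v, v + 1)) ∨ (∃ v, e = s(v, v + C)) := by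
  induction e with
  | h u v =>
    rw [mem_edgeSet, ml_adj_iff hk] at he
    rcases he with h | h | h
    · exact Or.inl ⟨u, by rw [h]⟩
    · exact Or.inl ⟨v, by rw [h, Sym2.eq_swap]⟩
    · exact Or.inr ⟨u, by rw [h]⟩

lemma ml_s_step_inj (hk : 2 ≤ k) {u w : ZMod (4 * k)} :
    s(u, u + 1) = s(w, w + 1) ↔ u = w := by
  rw [Sym2.eq_iff]
  constructor
  · rintro (⟨h, -⟩ | ⟨h1, h2⟩)
    · exact h
    · exact absurd (by linear_combination h2 - h1 : (2 : ZMod (4*k)) = 0) (ml_two_ne_zero hk)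
  · rintro rfl; exact Or.inl ⟨rfl, rfl⟩

lemma ml_s_rung_iff (hk : 2 ≤ k) {u w : ZMod (4 * k)} :
    s(u, u + C) = s(w, w + C) ↔ u = w ∨ u = w + C := by
  have hcc := ml_c_add_c hk
  rw [Sym2.eq_iff]
  constructor
  · rintro (⟨h, -⟩ | ⟨h1, -⟩)
    · exact Or.inl h
    · exact Or.inr h1
  · rintro (rfl | rfl)
    · exact Or.inl ⟨rfl, rfl⟩
    · exact Or.inr ⟨rfl, by linear_combination hcc⟩

lemma ml_s_step_ne_rung (hk : 2 ≤ k) {u w : ZMod (4 * k)} :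
    s(u, u + 1) ≠ s(w, w + C) := by
  intro h
  rw [Sym2.eq_iff] at h
  rcases h with ⟨rfl, h2⟩ | ⟨h1, h2⟩
  · exact ml_c_ne_one hk (by linear_combination -h2)
  · exact ml_c_ne_neg_one hk (by linear_combination h2 - h1)

/-- The perfect matching subgraph defined by an involution. -/
def matchOf {V : Type*} (G : SimpleGraph V) (f : V → V) (hf : ∀ v, f (f v) = v)
    (hadj : ∀ v, G.Adj v (f v)) : G.Subgraph where
  verts := Set.univ
  Adj u v := f u = v ∨ f v = u
  adj_sub := by rintro u v (rfl | rfl)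
                · exact hadj u
                · exact (hadj v).symm
  edge_vert := fun _ => Set.mem_univ _
  symm := ⟨fun u v h => Or.symm h⟩

lemma matchOf_isPM {V : Type*} {G : SimpleGraph V} {f : V → V} {hf : ∀ v, f (f v) = v}
    {hadj : ∀ v, G.Adj v (f v)} : (matchOf G f hf hadj).IsPerfectMatching := by
  rw [Subgraph.isPerfectMatching_iff]
  intro v
  refine ⟨f v, Or.inl rfl, ?_⟩
  rintro w (h | h)
  · exact h.symm
  · rw [← hf w, h]

lemma matchOf_edge {V : Type*} {G : SimpleGraph V} {f : V → V} {hf : ∀ v, f (f v) = v}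
    {hadj : ∀ v, G.Adj v (f v)} {a b : V} :
    s(a, b) ∈ (matchOf G f hf hadj).edgeSet ↔ (f a = b ∨ f b = a) := Iff.rfl

lemma ml_val_add_one (hk : 2 ≤ k) (v : ZMod (4 * k)) :
    (v + 1).val = if v.val + 1 = 4 * k then 0 else v.val + 1 := by
  haveI := ml_neZero hk
  haveI : Fact (1 < 4 * k) := ⟨by omega⟩
  have hv := ZMod.val_lt v
  rw [ZMod.val_add, ZMod.val_one]
  rcases Nat.lt_or_ge (v.val + 1) (4 * k) with h | h
  · rw [Nat.mod_eq_of_lt h, if_neg (by omega)]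
  · have : v.val + 1 = 4 * k := by omega
    rw [this, Nat.mod_self, if_pos rfl]

lemma ml_val_add_c (hk : 2 ≤ k) (v : ZMod (4 * k)) :
    (v + C).val = if v.val < 2 * k then v.val + 2 * k else v.val - 2 * k := by
  haveI := ml_neZero hk
  have hv := ZMod.val_lt v
  rw [ZMod.val_add, ZMod.val_cast_of_lt (by omega : 2 * k < 4 * k)]
  rcases Nat.lt_or_ge v.val (2 * k) with h | h
  · rw [Nat.mod_eq_of_lt (by omega), if_pos h]
  · rw [if_neg (by omega), Nat.mod_eq_sub_mod (by omega),
      (by omega : v.val + 2 * k - 4 * k = v.val - 2 * k), Nat.mod_eq_of_lt (by omega)]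

end Two

section Three
variable {k : ℕ}

local notation "C" => ((2 * k : ℕ) : ZMod (4 * k))

lemma ml_parity_flip (hk : 2 ≤ k) (v : ZMod (4 * k)) : (v + 1).val % 2 ≠ v.val % 2 := by
  haveI := ml_neZero hk
  have h := ml_val_add_one hk v
  have hv := ZMod.val_lt v
  by_cases hc : v.val + 1 = 4 * k
  · rw [if_pos hc] at h; omega
  · rw [if_neg hc] at h; omega

/-- membership in `cutEdges` for an explicit edge. -/
lemma cutEdges_mk_mem {V : Type*} {G : SimpleGraph V} {X : Set V} {x y : V} :
    s(x, y) ∈ cutEdges G X ↔ G.Adj x y ∧ ((x ∈ X ∧ y ∉ X) ∨ (y ∈ X ∧ x ∉ X)) := by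
  unfold cutEdges
  constructor
  · rintro ⟨he, a, b, heq, ha, hb⟩
    rw [Sym2.eq_iff] at heq
    refine ⟨he, ?_⟩
    rcases heq with ⟨rfl, rfl⟩ | ⟨rfl, rfl⟩
    · exact Or.inl ⟨ha, hb⟩
    · exact Or.inr ⟨ha, hb⟩
  · rintro ⟨he, ⟨ha, hb⟩ | ⟨ha, hb⟩⟩
    · exact ⟨he, x, y, rfl, ha, hb⟩
    · exact ⟨he, y, x, Sym2.eq_swap, ha, hb⟩

/- The three canonical involutions. -/
lemma ml_fR_invol (hk : 2 ≤ k) : ∀ v : ZMod (4 * k), (v + C) + C = v := by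
  intro v; linear_combination ml_c_add_c hk

lemma ml_fR_adj (hk : 2 ≤ k) : ∀ v : ZMod (4 * k), (mlG k).Adj v (v + C) := by
  intro v; exact (ml_adj_iff hk).mpr (Or.inr (Or.inr rfl))

def mlFE (k : ℕ) (v : ZMod (4 * k)) : ZMod (4 * k) :=
  if v.val % 2 = 0 then v + 1 else v - 1

def mlFO (k : ℕ) (v : ZMod (4 * k)) : ZMod (4 * k) :=
  if v.val % 2 = 0 then v - 1 else v + 1

lemma ml_fE_invol (hk : 2 ≤ k) : ∀ v, mlFE k (mlFE k v) = v := by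
  intro v
  unfold mlFE
  by_cases h : v.val % 2 = 0
  · have := ml_parity_flip hk v
    rw [if_pos h, if_neg (by omega)]; ring
  · have h2 : v - 1 + 1 = v := by ring
    have := ml_parity_flip hk (v - 1)
    rw [h2] at this
    rw [if_neg h, if_pos (by omega)]; ring

lemma ml_fO_invol (hk : 2 ≤ k) : ∀ v, mlFO k (mlFO k v) = v := by
  intro v
  unfold mlFO
  by_cases h : v.val % 2 = 0
  · have h2 : v - 1 + 1 = v := by ring
    have := ml_parity_flip hk (v - 1)
    rw [h2] at this
    rw [if_pos h, if_neg (by omega)]; ring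
  · have := ml_parity_flip hk v
    rw [if_neg h, if_pos (by omega)]; ring

lemma ml_fE_adj (hk : 2 ≤ k) : ∀ v, (mlG k).Adj v (mlFE k v) := by
  intro v
  unfold mlFE
  by_cases h : v.val % 2 = 0
  · rw [if_pos h]; exact (ml_adj_iff hk).mpr (Or.inl rfl)
  · rw [if_neg h]; exact (ml_adj_iff hk).mpr (Or.inr (Or.inl (by ring)))

lemma ml_fO_adj (hk : 2 ≤ k) : ∀ v, (mlG k).Adj v (mlFO k v) := by
  intro v
  unfold mlFO
  by_cases h : v.val % 2 = 0
  · rw [if_pos h]; exact (ml_adj_iff hk).mpr (Or.inr (Or.inl (by ring)))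
  · rw [if_neg h]; exact (ml_adj_iff hk).mpr (Or.inl rfl)

/-- The rung matching ∩ cut. -/
lemma ml_R_inter (hk : 2 ≤ k) (X : Set (ZMod (4 * k))) :
    (matchOf (mlG k) (· + C) (ml_fR_invol hk) (ml_fR_adj hk)).edgeSet ∩ cutEdges (mlG k) X =
      (fun v => s(v, v + C)) '' {v | ¬(v ∈ X ↔ v + C ∈ X)} := by
  have hcc := ml_fR_invol hk
  ext e
  induction e with
  | h x y =>
    simp only [Set.mem_inter_iff, matchOf_edge, Set.mem_image, Set.mem_setOf_eq]
    constructor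
    · rintro ⟨hm, hc⟩
      rw [cutEdges_mk_mem] at hc
      rcases hm with rfl | rfl
      · refine ⟨x, ?_, rfl⟩
        rcases hc.2 with ⟨h1, h2⟩ | ⟨h1, h2⟩ <;> tauto
      · refine ⟨y, ?_, Sym2.eq_swap⟩
        rcases hc.2 with ⟨h1, h2⟩ | ⟨h1, h2⟩ <;> tauto
    · rintro ⟨v, hv, heq⟩
      rw [Sym2.eq_iff] at heq
      rcases heq with ⟨rfl, rfl⟩ | ⟨rfl, rfl⟩
      · exact ⟨Or.inl rfl, cutEdges_mk_mem.mpr ⟨ml_fR_adj hk v, by tauto⟩⟩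
      · refine ⟨Or.inr rfl, cutEdges_mk_mem.mpr ⟨(ml_fR_adj hk v).symm, by tauto⟩⟩

/-- Two-to-one counting for rung images. -/
lemma ml_rung_count (hk : 2 ≤ k) (S : Set (ZMod (4 * k))) (hS : ∀ v, v ∈ S → v + C ∈ S) :
    S.ncard = 2 * ((fun v => s(v, v + C)) '' S).ncard := by
  haveI := ml_neZero hk
  have hcc := ml_fR_invol hk
  set A : Set (ZMod (4 * k)) := S ∩ {v | v.val < 2 * k} with hA
  set B : Set (ZMod (4 * k)) := S ∩ {v | ¬ v.val < 2 * k} with hB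
  have hvalc : ∀ v : ZMod (4 * k), v.val < 2 * k → (v + C).val = v.val + 2 * k := by
    intro v h; rw [ml_val_add_c hk, if_pos h]
  have hvalc' : ∀ v : ZMod (4 * k), ¬ v.val < 2 * k → (v + C).val = v.val - 2 * k := by
    intro v h; rw [ml_val_add_c hk, if_neg h]
  have hSunion : S = A ∪ B := by
    ext v; simp only [hA, hB, Set.mem_inter_iff, Set.mem_union, Set.mem_setOf_eq]; tauto
  have hdisj : Disjoint A B := by
    rw [Set.disjoint_left]; rintro v ⟨-, h1⟩ ⟨-, h2⟩; exact h2 h1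
  have hBA : B = (fun v => v + C) '' A := by
    ext w
    simp only [hA, hB, Set.mem_inter_iff, Set.mem_setOf_eq, Set.mem_image]
    constructor
    · rintro ⟨hw, hwv⟩
      refine ⟨w + C, ⟨hS w hw, ?_⟩, hcc w⟩
      have := hvalc' w hwv
      have h2 := ZMod.val_lt w
      omega
    · rintro ⟨v, ⟨hv, hvlt⟩, rfl⟩
      refine ⟨hS v hv, ?_⟩
      rw [hvalc v hvlt]; omega
  have haddinj : Function.Injective (fun v : ZMod (4 * k) => v + C) := by
    intro a b h; simpa using h
  have hcardB : B.ncard = A.ncard := by rw [hBA, Set.ncard_image_of_injective _ haddinj]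
  have himg : (fun v => s(v, v + C)) '' S = (fun v => s(v, v + C)) '' A := by
    apply Set.Subset.antisymm
    · rintro e ⟨v, hv, rfl⟩
      by_cases hvlt : v.val < 2 * k
      · exact ⟨v, ⟨hv, hvlt⟩, rfl⟩
      · refine ⟨v + C, ⟨hS v hv, ?_⟩, ?_⟩
        · have := hvalc' v hvlt; have h2 := ZMod.val_lt v; simp only [Set.mem_setOf_eq]; omega
        · simp only
          rw [hcc v, Sym2.eq_swap]
    · rintro e ⟨v, hv, rfl⟩
      exact ⟨v, hv.1, rfl⟩
  have hinjA : Set.InjOn (fun v => s(v, v + C)) A := by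
    rintro u ⟨-, hu⟩ v ⟨-, hv⟩ h
    simp only at h
    rcases (ml_s_rung_iff hk).mp h with h | h
    · exact h
    · exfalso
      simp only [Set.mem_setOf_eq] at hu hv
      rw [h, hvalc v hv] at hu
      omega
  rw [himg, Set.ncard_image_of_injOn hinjA, hSunion,
    Set.ncard_union_eq hdisj (Set.toFinite A) (Set.toFinite B), hcardB]
  omega

end Three

section Four
variable {k : ℕ}

local notation "C" => ((2 * k : ℕ) : ZMod (4 * k))

/-- The even matching ∩ cut. -/
lemma ml_E_inter (hk : 2 ≤ k) (X : Set (ZMod (4 * k))) :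
    (matchOf (mlG k) (mlFE k) (ml_fE_invol hk) (ml_fE_adj hk)).edgeSet ∩ cutEdges (mlG k) X =
      (fun v => s(v, v + 1)) '' {v | v.val % 2 = 0 ∧ ¬(v ∈ X ↔ v + 1 ∈ X)} := by
  ext e
  induction e with
  | h x y =>
    simp only [Set.mem_inter_iff, matchOf_edge, Set.mem_image, Set.mem_setOf_eq]
    constructor
    · rintro ⟨hm, hc⟩
      rw [cutEdges_mk_mem] at hc
      have key : ∀ a b : ZMod (4 * k), mlFE k a = b → s(x,y) = s(a,b) →
          ((a ∈ X ∧ b ∉ X) ∨ (b ∈ X ∧ a ∉ X)) →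
          ∃ v, (v.val % 2 = 0 ∧ ¬(v ∈ X ↔ v + 1 ∈ X)) ∧ s(v, v + 1) = s(x, y) := by
        intro a b hab heq hsplit
        unfold mlFE at hab
        by_cases hpar : a.val % 2 = 0
        · rw [if_pos hpar] at hab
          subst hab
          exact ⟨a, ⟨hpar, by tauto⟩, heq.symm⟩
        · rw [if_neg hpar] at hab
          subst hab
          have h1 : (a - 1) + 1 = a := by ring
          have := ml_parity_flip hk (a - 1)
          rw [h1] at this
          refine ⟨a - 1, ⟨by omega, by rw [h1]; tauto⟩, by rw [h1, Sym2.eq_swap]; exact heq.symm⟩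
      rcases hm with hxy | hyx
      · exact key x y hxy rfl hc.2
      · refine key y x hyx Sym2.eq_swap ?_
        tauto
    · rintro ⟨v, ⟨hpar, hxor⟩, heq⟩
      have hfe : mlFE k v = v + 1 := by unfold mlFE; rw [if_pos hpar]
      rw [Sym2.eq_iff] at heq
      have hadj := ml_fE_adj hk v
      rw [hfe] at hadj
      rcases heq with ⟨rfl, rfl⟩ | ⟨rfl, rfl⟩
      · exact ⟨Or.inl hfe, cutEdges_mk_mem.mpr ⟨hadj, by tauto⟩⟩
      · exact ⟨Or.inr hfe, cutEdges_mk_mem.mpr ⟨hadj.symm, by tauto⟩⟩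

/-- The odd matching ∩ cut. -/
lemma ml_O_inter (hk : 2 ≤ k) (X : Set (ZMod (4 * k))) :
    (matchOf (mlG k) (mlFO k) (ml_fO_invol hk) (ml_fO_adj hk)).edgeSet ∩ cutEdges (mlG k) X =
      (fun v => s(v, v + 1)) '' {v | v.val % 2 = 1 ∧ ¬(v ∈ X ↔ v + 1 ∈ X)} := by
  ext e
  induction e with
  | h x y =>
    simp only [Set.mem_inter_iff, matchOf_edge, Set.mem_image, Set.mem_setOf_eq]
    constructor
    · rintro ⟨hm, hc⟩
      rw [cutEdges_mk_mem] at hc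
      have key : ∀ a b : ZMod (4 * k), mlFO k a = b → s(x,y) = s(a,b) →
          ((a ∈ X ∧ b ∉ X) ∨ (b ∈ X ∧ a ∉ X)) →
          ∃ v, (v.val % 2 = 1 ∧ ¬(v ∈ X ↔ v + 1 ∈ X)) ∧ s(v, v + 1) = s(x, y) := by
        intro a b hab heq hsplit
        unfold mlFO at hab
        by_cases hpar : a.val % 2 = 0
        · rw [if_pos hpar] at hab
          subst hab
          have h1 : (a - 1) + 1 = a := by ring
          have := ml_parity_flip hk (a - 1)
          rw [h1] at this
          refine ⟨a - 1, ⟨by omega, by rw [h1]; tauto⟩, by rw [h1, Sym2.eq_swap]; exact heq.symm⟩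
        · rw [if_neg hpar] at hab
          subst hab
          exact ⟨a, ⟨by omega, by tauto⟩, heq.symm⟩
      rcases hm with hxy | hyx
      · exact key x y hxy rfl hc.2
      · refine key y x hyx Sym2.eq_swap ?_
        tauto
    · rintro ⟨v, ⟨hpar, hxor⟩, heq⟩
      have hfe : mlFO k v = v + 1 := by unfold mlFO; rw [if_neg (by omega)]
      rw [Sym2.eq_iff] at heq
      have hadj := ml_fO_adj hk v
      rw [hfe] at hadj
      rcases heq with ⟨rfl, rfl⟩ | ⟨rfl, rfl⟩
      · exact ⟨Or.inl hfe, cutEdges_mk_mem.mpr ⟨hadj, by tauto⟩⟩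
      · exact ⟨Or.inr hfe, cutEdges_mk_mem.mpr ⟨hadj.symm, by tauto⟩⟩

/-- From tightness: the step-difference set has exactly two elements and the rung-difference
set has exactly two elements. -/
lemma ml_tight_counts (hk : 2 ≤ k) {X : Set (ZMod (4 * k))} (ht : IsTightCut (mlG k) X) :
    {v : ZMod (4 * k) | ¬(v ∈ X ↔ v + 1 ∈ X)}.ncard = 2 ∧
    {v : ZMod (4 * k) | ¬(v ∈ X ↔ v + C ∈ X)}.ncard = 2 := by
  haveI := ml_neZero hk
  have hR := ht _ (matchOf_isPM (f := (· + C)) (hf := ml_fR_invol hk) (hadj := ml_fR_adj hk))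
  have hE := ht _ (matchOf_isPM (f := mlFE k) (hf := ml_fE_invol hk) (hadj := ml_fE_adj hk))
  have hO := ht _ (matchOf_isPM (f := mlFO k) (hf := ml_fO_invol hk) (hadj := ml_fO_adj hk))
  rw [ml_R_inter hk] at hR
  rw [ml_E_inter hk] at hE
  rw [ml_O_inter hk] at hO
  have hstepinj : Function.Injective (fun v : ZMod (4 * k) => s(v, v + 1)) := by
    intro a b h; exact (ml_s_step_inj hk).mp h
  rw [Set.ncard_image_of_injective _ hstepinj] at hE hO
  constructor
  · have hsplit : {v : ZMod (4 * k) | ¬(v ∈ X ↔ v + 1 ∈ X)} =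
        {v | v.val % 2 = 0 ∧ ¬(v ∈ X ↔ v + 1 ∈ X)} ∪
        {v | v.val % 2 = 1 ∧ ¬(v ∈ X ↔ v + 1 ∈ X)} := by
      ext v; simp only [Set.mem_setOf_eq, Set.mem_union]
      constructor
      · intro h; rcases Nat.mod_two_eq_zero_or_one v.val with h2 | h2 <;> tauto
      · tauto
    have hdisj : Disjoint {v : ZMod (4 * k) | v.val % 2 = 0 ∧ ¬(v ∈ X ↔ v + 1 ∈ X)}
        {v : ZMod (4 * k) | v.val % 2 = 1 ∧ ¬(v ∈ X ↔ v + 1 ∈ X)} := by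
      rw [Set.disjoint_left]; rintro v ⟨h1, -⟩ ⟨h2, -⟩; omega
    rw [hsplit, Set.ncard_union_eq hdisj (Set.toFinite _) (Set.toFinite _), hE, hO]
  · have hclosed : ∀ v, v ∈ {v : ZMod (4 * k) | ¬(v ∈ X ↔ v + C ∈ X)} →
        v + C ∈ {v : ZMod (4 * k) | ¬(v ∈ X ↔ v + C ∈ X)} := by
      intro v hv
      simp only [Set.mem_setOf_eq, ml_fR_invol hk] at *
      tauto
    have := ml_rung_count hk _ hclosed
    rw [hR] at this
    omega

/-- existence of an "exit point". -/
lemma ml_exists_exit (hk : 2 ≤ k) {X : Set (ZMod (4 * k))} {v w : ZMod (4 * k)}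
    (hv : v ∈ X) (hw : w ∉ X) : ∃ p, p ∈ X ∧ p + 1 ∉ X := by
  haveI := ml_neZero hk
  by_contra hcon
  push_neg at hcon
  have key : ∀ j : ℕ, v + (j : ZMod (4 * k)) ∈ X := by
    intro j
    induction j with
    | zero => simpa using hv
    | succ n ih =>
      have : v + ((n + 1 : ℕ) : ZMod (4 * k)) = (v + (n : ℕ)) + 1 := by push_cast; ring
      rw [this]
      exact hcon _ ih
  have : v + ((w - v).val : ZMod (4 * k)) = w := by
    rw [ZMod.natCast_zmod_val]; ring
  exact hw (this ▸ key (w - v).val)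

lemma ml_exists_entry (hk : 2 ≤ k) {X : Set (ZMod (4 * k))} {v w : ZMod (4 * k)}
    (hv : v ∈ X) (hw : w ∉ X) : ∃ p, p ∉ X ∧ p + 1 ∈ X := by
  have := ml_exists_exit hk (X := Xᶜ) (v := w) (w := v) hw (by simpa using hv)
  simpa using this

/-- Parity: the step-difference set is even. -/
lemma ml_D1_even (hk : 2 ≤ k) (X : Set (ZMod (4 * k))) :
    2 ∣ {v : ZMod (4 * k) | ¬(v ∈ X ↔ v + 1 ∈ X)}.ncard := by
  classical
  haveI := ml_neZero hk
  set b : ZMod (4 * k) → ZMod 2 := fun v => if v ∈ X then 1 else 0 with hb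
  have key : ∀ v : ZMod (4 * k),
      (if ¬(v ∈ X ↔ v + 1 ∈ X) then (1 : ZMod 2) else 0) = b (v + 1) - b v := by
    intro v
    by_cases h1 : v ∈ X <;> by_cases h2 : v + 1 ∈ X <;>
      simp [hb, h1, h2] <;> first | rfl | decide
  have hsum : ∑ v : ZMod (4 * k), (if ¬(v ∈ X ↔ v + 1 ∈ X) then (1 : ZMod 2) else 0) = 0 := by
    rw [Finset.sum_congr rfl (fun v _ => key v), Finset.sum_sub_distrib]
    have : ∑ v : ZMod (4 * k), b (v + 1) = ∑ v : ZMod (4 * k), b v :=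
      Fintype.sum_equiv (Equiv.addRight (1 : ZMod (4 * k))) _ _ (fun v => rfl)
    rw [this, sub_self]
  rw [Finset.sum_boole] at hsum
  have hdvd : (2 : ℕ) ∣ (Finset.univ.filter fun v : ZMod (4 * k) => ¬(v ∈ X ↔ v + 1 ∈ X)).card :=
    (ZMod.natCast_eq_zero_iff _ 2).mp hsum
  have : {v : ZMod (4 * k) | ¬(v ∈ X ↔ v + 1 ∈ X)}.ncard =
      (Finset.univ.filter fun v : ZMod (4 * k) => ¬(v ∈ X ↔ v + 1 ∈ X)).card := by
    rw [← Set.ncard_coe_finset]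
    congr 1
    ext v
    simp
  omega

end Four


lemma ml_nat_count (k d : ℕ) (hk : 2 ≤ k) (hd1 : 1 ≤ d) (hd2 : d ≤ 4 * k - 1)
    (h : ((Finset.range (4 * k)).filter (fun j =>
      ¬((1 ≤ j ∧ j ≤ d) ↔
        (1 ≤ (if j < 2 * k then j + 2 * k else j - 2 * k) ∧
         (if j < 2 * k then j + 2 * k else j - 2 * k) ≤ d)))).card = 2) :
    d = 1 ∨ d = 4 * k - 1 := by
  rcases Nat.lt_trichotomy d (2 * k) with hd | hd | hd
  · -- d ≤ 2k - 1
    left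
    have hset : ((Finset.range (4 * k)).filter (fun j =>
        ¬((1 ≤ j ∧ j ≤ d) ↔
          (1 ≤ (if j < 2 * k then j + 2 * k else j - 2 * k) ∧
           (if j < 2 * k then j + 2 * k else j - 2 * k) ≤ d)))) =
        Finset.Icc 1 d ∪ Finset.Icc (2 * k + 1) (2 * k + d) := by
      ext j
      simp only [Finset.mem_filter, Finset.mem_range, Finset.mem_union, Finset.mem_Icc]
      by_cases hj : j < 2 * k <;> simp only [hj, if_pos, if_neg, ite_true, ite_false] <;> omega
    rw [hset, Finset.card_union_of_disjoint (by
      rw [Finset.disjoint_left]; intro j hj1 hj2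
      simp only [Finset.mem_Icc] at hj1 hj2; omega), Nat.card_Icc, Nat.card_Icc] at h
    omega
  · -- d = 2k : at least three elements
    exfalso
    have hsub : ({1, 2, 3} : Finset ℕ) ⊆ (Finset.range (4 * k)).filter (fun j =>
        ¬((1 ≤ j ∧ j ≤ d) ↔
          (1 ≤ (if j < 2 * k then j + 2 * k else j - 2 * k) ∧
           (if j < 2 * k then j + 2 * k else j - 2 * k) ≤ d))) := by
      intro j hj
      simp only [Finset.mem_insert, Finset.mem_singleton] at hj
      have hjlt : j < 2 * k := by omega
      simp only [Finset.mem_filter, Finset.mem_range, hjlt, ite_true, if_pos]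
      omega
    have := Finset.card_le_card hsub
    rw [h] at this
    simp at this
  · -- d ≥ 2k + 1
    right
    have hset : ((Finset.range (4 * k)).filter (fun j =>
        ¬((1 ≤ j ∧ j ≤ d) ↔
          (1 ≤ (if j < 2 * k then j + 2 * k else j - 2 * k) ∧
           (if j < 2 * k then j + 2 * k else j - 2 * k) ≤ d)))) =
        insert 0 (Finset.Icc (d - 2 * k + 1) (2 * k) ∪ Finset.Icc (d + 1) (4 * k - 1)) := by
      ext j
      simp only [Finset.mem_filter, Finset.mem_range, Finset.mem_insert, Finset.mem_union,
        Finset.mem_Icc]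
      by_cases hj : j < 2 * k <;> simp only [hj, ite_true, ite_false] <;> omega
    rw [hset] at h
    rw [Finset.card_insert_of_notMem (by
      simp only [Finset.mem_union, Finset.mem_Icc]; omega)] at h
    rw [Finset.card_union_of_disjoint (by
      rw [Finset.disjoint_left]; intro j hj1 hj2
      simp only [Finset.mem_Icc] at hj1 hj2; omega), Nat.card_Icc, Nat.card_Icc] at h
    omega

section Five
variable {k : ℕ}

local notation "C" => ((2 * k : ℕ) : ZMod (4 * k))

/-- Main structural lemma: two step-changes and two rung-changes force a trivial shore. -/
lemma ml_two_two_trivial (hk : 2 ≤ k) {X : Set (ZMod (4 * k))}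
    (h1 : {v : ZMod (4 * k) | ¬(v ∈ X ↔ v + 1 ∈ X)}.ncard = 2)
    (hkk : {v : ZMod (4 * k) | ¬(v ∈ X ↔ v + C ∈ X)}.ncard = 2) :
    IsTrivialShore X := by
  haveI := ml_neZero hk
  obtain ⟨a, bb, hab, hset⟩ := Set.ncard_eq_two.mp h1
  have hchange : ∀ v : ZMod (4 * k), ¬(v ∈ X ↔ v + 1 ∈ X) ↔ (v = a ∨ v = bb) := by
    intro v
    have := Set.ext_iff.mp hset v
    simpa using this
  set d : ℕ := (bb - a).val with hd
  have hd1 : 1 ≤ d := by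
    have : bb - a ≠ 0 := sub_ne_zero_of_ne (Ne.symm hab)
    have := (ZMod.val_eq_zero (bb - a)).not.mpr this
    omega
  have hd2 : d ≤ 4 * k - 1 := by have := ZMod.val_lt (bb - a); omega
  have hb : a + ((d : ℕ) : ZMod (4 * k)) = bb := by
    rw [hd, ZMod.natCast_zmod_val]; ring
  have main : ∀ i : ℕ, 1 ≤ i → i ≤ 4 * k →
      ((a + (i : ℕ) ∈ X) ↔ (if i ≤ d then (a + 1 ∈ X) else ¬(a + 1 ∈ X))) := by
    intro i
    induction i with
    | zero => intro h; omega
    | succ m ih =>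
      intro h1' h2'
      by_cases hm : m = 0
      · subst hm
        rw [if_pos (by omega)]
        norm_num
      · have hm1 : 1 ≤ m := by omega
        have ihm := ih hm1 (by omega)
        have hcast : a + ((m + 1 : ℕ) : ZMod (4 * k)) = (a + (m : ℕ)) + 1 := by
          push_cast; ring
        rw [hcast]
        by_cases hmd : m = d
        · have hbb : a + ((m : ℕ) : ZMod (4 * k)) = bb := by rw [hmd, hb]
          have hch : ¬(bb ∈ X ↔ bb + 1 ∈ X) := (hchange bb).mpr (Or.inr rfl)
          rw [hbb, if_pos (by omega)] at ihm
          rw [hbb, if_neg (by omega)]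
          tauto
        · have hne1 : a + ((m : ℕ) : ZMod (4 * k)) ≠ a := by
            intro hcon
            have hz : ((m : ℕ) : ZMod (4 * k)) = 0 := by linear_combination hcon
            rw [ml_cast_eq_zero_iff hk (by omega)] at hz
            omega
          have hne2 : a + ((m : ℕ) : ZMod (4 * k)) ≠ bb := by
            intro hcon
            rw [← hb] at hcon
            have hz : ((m : ℕ) : ZMod (4 * k)) = ((d : ℕ) : ZMod (4 * k)) := by
              linear_combination hcon
            rw [ml_cast_eq_iff hk (by omega) (by omega)] at hz
            exact hmd hz
          have hnc : (a + ((m : ℕ) : ZMod (4 * k)) ∈ X ↔ a + ((m : ℕ) : ZMod (4 * k)) + 1 ∈ X) := by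
            by_contra hcon
            rcases (hchange _).mp hcon with h | h
            · exact hne1 h
            · exact hne2 h
          by_cases hle : m + 1 ≤ d
          · rw [if_pos hle]
            rw [if_pos (by omega)] at ihm
            tauto
          · rw [if_neg hle]
            rw [if_neg (by omega)] at ihm
            tauto
  have char : ∀ v : ZMod (4 * k),
      v ∈ X ↔ ((1 ≤ (v - a).val ∧ (v - a).val ≤ d) ↔ (a + 1 ∈ X)) := by
    intro v
    have hval := ZMod.val_lt (v - a)
    by_cases h0 : (v - a).val = 0
    · have hva : v = a := by
        have hz : v - a = 0 := by rw [← ZMod.val_eq_zero]; exact h0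
        linear_combination hz
      have hm := main (4 * k) (by omega) (le_refl _)
      rw [ZMod.natCast_self, add_zero, if_neg (by omega)] at hm
      subst hva
      rw [h0]
      have hnle : ¬(1 ≤ (0 : ℕ)) := by omega
      tauto
    · have h1' : 1 ≤ (v - a).val := by omega
      have hva : a + (((v - a).val : ℕ) : ZMod (4 * k)) = v := by
        rw [ZMod.natCast_zmod_val]; ring
      have hm := main ((v - a).val) h1' (by omega)
      rw [hva] at hm
      by_cases hle : (v - a).val ≤ d
      · rw [if_pos hle] at hm
        tauto
      · rw [if_neg hle] at hm
        tauto
  classical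
  set P : ℕ → Prop := fun j => ¬((1 ≤ j ∧ j ≤ d) ↔
      (1 ≤ (if j < 2 * k then j + 2 * k else j - 2 * k) ∧
       (if j < 2 * k then j + 2 * k else j - 2 * k) ≤ d)) with hP
  have hxorchar : ∀ v : ZMod (4 * k), (¬(v ∈ X ↔ v + C ∈ X)) ↔ P ((v - a).val) := by
    intro v
    have hvalc : (v + C - a).val = if (v - a).val < 2 * k then (v - a).val + 2 * k
        else (v - a).val - 2 * k := by
      have heq : v + C - a = (v - a) + C := by ring
      rw [heq, ml_val_add_c hk]
    have c1 := char v
    have c2 := char (v + C)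
    rw [hvalc] at c2
    rw [hP, c1, c2]
    obtain ⟨j', hj'⟩ : ∃ j', (if (v - a).val < 2 * k then (v - a).val + 2 * k
        else (v - a).val - 2 * k) = j' := ⟨_, rfl⟩
    rw [hj']
    by_cases hcc : a + 1 ∈ X <;> simp only [hcc, iff_true, iff_false, not_iff_not] <;> omega
  have himg : (fun v : ZMod (4 * k) => (v - a).val) '' {v | ¬(v ∈ X ↔ v + C ∈ X)} =
      ↑((Finset.range (4 * k)).filter P) := by
    ext j
    simp only [Set.mem_image, Set.mem_setOf_eq, Finset.coe_filter, Finset.mem_range,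
      Set.mem_setOf_eq]
    constructor
    · rintro ⟨v, hv, rfl⟩
      exact ⟨ZMod.val_lt _, (hxorchar v).mp hv⟩
    · rintro ⟨hj, hPj⟩
      refine ⟨a + (j : ℕ), ?_, ?_⟩
      · rw [hxorchar]
        have heq : (a + (j : ℕ) - a) = ((j : ℕ) : ZMod (4 * k)) := by ring
        rw [heq, ZMod.val_cast_of_lt hj]
        exact hPj
      · have heq : (a + (j : ℕ) - a) = ((j : ℕ) : ZMod (4 * k)) := by ring
        rw [heq, ZMod.val_cast_of_lt hj]
  have hinj : Function.Injective (fun v : ZMod (4 * k) => (v - a).val) := by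
    intro u v h
    have h2 := ZMod.val_injective _ h
    exact sub_left_inj.mp h2
  have hcount : ((Finset.range (4 * k)).filter P).card = 2 := by
    have h3 := Set.ncard_image_of_injective {v : ZMod (4 * k) | ¬(v ∈ X ↔ v + C ∈ X)} hinj
    rw [himg, Set.ncard_coe_finset] at h3
    omega
  rcases ml_nat_count k d hk hd1 hd2 hcount with hdd | hdd
  · -- d = 1
    have hmem : ∀ v : ZMod (4 * k), ((1 ≤ (v - a).val ∧ (v - a).val ≤ 1) ↔ v = a + 1) := by
      intro v
      constructor
      · intro h
        have h1' : (v - a).val = 1 := by omega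
        have h2' : v - a = ((1 : ℕ) : ZMod (4 * k)) := by rw [← h1', ZMod.natCast_zmod_val]
        push_cast at h2'
        linear_combination h2'
      · rintro rfl
        have heq : a + 1 - a = ((1 : ℕ) : ZMod (4 * k)) := by push_cast; ring
        rw [heq, ZMod.val_cast_of_lt (by omega)]
        omega
    have hX : ∀ v : ZMod (4 * k), (v ∈ X ↔ ((v = a + 1) ↔ (a + 1 ∈ X))) := by
      intro v
      rw [char v, hdd, hmem v]
    by_cases hc : a + 1 ∈ X
    · exact Or.inl ⟨a + 1, Set.ext fun v => by rw [Set.mem_singleton_iff, hX v]; tauto⟩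
    · exact Or.inr ⟨a + 1, Set.ext fun v => by
        rw [Set.mem_compl_iff, Set.mem_singleton_iff, hX v]; tauto⟩
  · -- d = 4k - 1
    have hmem0 : ∀ v : ZMod (4 * k), ((1 ≤ (v - a).val ∧ (v - a).val ≤ d) ↔ ¬(v = a)) := by
      intro v
      have h2' := ZMod.val_lt (v - a)
      have h0iff : (v - a).val = 0 ↔ v = a := by
        rw [ZMod.val_eq_zero, sub_eq_zero]
      rw [← h0iff, hdd]
      omega
    have hX : ∀ v : ZMod (4 * k), (v ∈ X ↔ (¬(v = a) ↔ (a + 1 ∈ X))) := by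
      intro v
      rw [char v, hmem0 v]
    by_cases hc : a + 1 ∈ X
    · exact Or.inr ⟨a, Set.ext fun v => by
        rw [Set.mem_compl_iff, Set.mem_singleton_iff, hX v]; tauto⟩
    · exact Or.inl ⟨a, Set.ext fun v => by rw [Set.mem_singleton_iff, hX v]; tauto⟩

end Five

section Six
variable {k : ℕ}

local notation "C" => ((2 * k : ℕ) : ZMod (4 * k))

lemma ml_reach_nat (hk : 2 ≤ k) (n : ℕ) : (mlG k).Reachable 0 ((n : ℕ) : ZMod (4 * k)) := by
  induction n with
  | zero =>
    rw [Nat.cast_zero]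
  | succ m ih =>
    have hadj : (mlG k).Adj ((m : ℕ) : ZMod (4 * k)) ((m + 1 : ℕ) : ZMod (4 * k)) := by
      rw [ml_adj_iff hk]
      left
      push_cast
      ring
    exact ih.trans hadj.reachable

lemma ml_connected (hk : 2 ≤ k) : (mlG k).Connected := by
  haveI := ml_neZero hk
  rw [connected_iff]
  constructor
  · intro u v
    have h0 : ∀ w : ZMod (4 * k), (mlG k).Reachable 0 w := by
      intro w
      have := ml_reach_nat hk w.val
      rwa [ZMod.natCast_zmod_val] at this
    exact (h0 u).symm.trans (h0 v)
  · exact ⟨0⟩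

lemma ml_matching_covered (hk : 2 ≤ k) : MatchingCovered (mlG k) := by
  refine ⟨ml_connected hk, ⟨s(0, 0 + 1), (ml_adj_iff hk).mpr (Or.inl rfl)⟩, ?_⟩
  intro e he
  rcases ml_edge_cases hk he with ⟨v, rfl⟩ | ⟨v, rfl⟩
  · by_cases hpar : v.val % 2 = 0
    · refine ⟨matchOf (mlG k) (mlFE k) (ml_fE_invol hk) (ml_fE_adj hk), matchOf_isPM, ?_⟩
      rw [matchOf_edge]
      left
      unfold mlFE
      rw [if_pos hpar]
    · refine ⟨matchOf (mlG k) (mlFO k) (ml_fO_invol hk) (ml_fO_adj hk), matchOf_isPM, ?_⟩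
      rw [matchOf_edge]
      left
      unfold mlFO
      rw [if_neg hpar]
  · exact ⟨matchOf (mlG k) (· + C) (ml_fR_invol hk) (ml_fR_adj hk), matchOf_isPM,
      (matchOf_edge).mpr (Or.inl rfl)⟩

/-- cut decomposition -/
lemma ml_cut_eq (hk : 2 ≤ k) (X : Set (ZMod (4 * k))) :
    cutEdges (mlG k) X =
      ((fun v => s(v, v + 1)) '' {v | ¬(v ∈ X ↔ v + 1 ∈ X)}) ∪
      ((fun v => s(v, v + C)) '' {v | ¬(v ∈ X ↔ v + C ∈ X)}) := by
  ext e
  constructor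
  · intro he
    have hedge : e ∈ (mlG k).edgeSet := he.1
    rcases ml_edge_cases hk hedge with ⟨v, rfl⟩ | ⟨v, rfl⟩
    · left
      refine ⟨v, ?_, rfl⟩
      have := (cutEdges_mk_mem.mp he).2
      simp only [Set.mem_setOf_eq]
      tauto
    · right
      refine ⟨v, ?_, rfl⟩
      have := (cutEdges_mk_mem.mp he).2
      simp only [Set.mem_setOf_eq]
      tauto
  · rintro (⟨v, hv, rfl⟩ | ⟨v, hv, rfl⟩)
    · exact cutEdges_mk_mem.mpr ⟨(ml_adj_iff hk).mpr (Or.inl rfl), by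
        simp only [Set.mem_setOf_eq] at hv; tauto⟩
    · exact cutEdges_mk_mem.mpr ⟨ml_fR_adj hk v, by
        simp only [Set.mem_setOf_eq] at hv; tauto⟩

lemma ml_cut_ncard (hk : 2 ≤ k) (X : Set (ZMod (4 * k))) :
    2 * (cutEdges (mlG k) X).ncard =
      2 * {v : ZMod (4 * k) | ¬(v ∈ X ↔ v + 1 ∈ X)}.ncard +
      {v : ZMod (4 * k) | ¬(v ∈ X ↔ v + C ∈ X)}.ncard := by
  haveI := ml_neZero hk
  rw [ml_cut_eq hk]
  have hdisj : Disjoint ((fun v => s(v, v + 1)) '' {v : ZMod (4 * k) | ¬(v ∈ X ↔ v + 1 ∈ X)})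
      ((fun v => s(v, v + C)) '' {v : ZMod (4 * k) | ¬(v ∈ X ↔ v + C ∈ X)}) := by
    rw [Set.disjoint_left]
    rintro e ⟨u, -, rfl⟩ ⟨w, -, heq⟩
    exact ml_s_step_ne_rung hk heq.symm
  rw [Set.ncard_union_eq hdisj (Set.toFinite _) (Set.toFinite _)]
  have hstepinj : Function.Injective (fun v : ZMod (4 * k) => s(v, v + 1)) := by
    intro a b h; exact (ml_s_step_inj hk).mp h
  rw [Set.ncard_image_of_injective _ hstepinj]
  have hclosed : ∀ v, v ∈ {v : ZMod (4 * k) | ¬(v ∈ X ↔ v + C ∈ X)} →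
      v + C ∈ {v : ZMod (4 * k) | ¬(v ∈ X ↔ v + C ∈ X)} := by
    intro v hv
    simp only [Set.mem_setOf_eq, ml_fR_invol hk] at *
    tauto
  have := ml_rung_count hk _ hclosed
  omega

lemma ml_ess4 (hk : 2 ≤ k) : EssFourEdgeConnected (mlG k) := by
  haveI := ml_neZero hk
  constructor
  · rintro X ⟨v, hv⟩ ⟨w, hw⟩
    rw [Set.mem_compl_iff] at hw
    obtain ⟨p, hp1, hp2⟩ := ml_exists_exit hk hv hw
    obtain ⟨q, hq1, hq2⟩ := ml_exists_entry hk hv hw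
    have hpq : p ≠ q := fun h => hq1 (h ▸ hp1)
    have hsub : {s(p, p + 1), s(q, q + 1)} ⊆ cutEdges (mlG k) X := by
      rintro e (rfl | rfl)
      · exact cutEdges_mk_mem.mpr ⟨(ml_adj_iff hk).mpr (Or.inl rfl), Or.inl ⟨hp1, hp2⟩⟩
      · exact cutEdges_mk_mem.mpr ⟨(ml_adj_iff hk).mpr (Or.inl rfl), Or.inr ⟨hq2, hq1⟩⟩
    have hne : s(p, p + 1) ≠ s(q, q + 1) := fun h => hpq ((ml_s_step_inj hk).mp h)
    calc 2 = ({s(p, p + 1), s(q, q + 1)} : Set (Sym2 (ZMod (4 * k)))).ncard :=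
          (Set.ncard_pair hne).symm
      _ ≤ (cutEdges (mlG k) X).ncard := Set.ncard_le_ncard hsub (Set.toFinite _)
  · intro X h3
    -- X and Xᶜ both nonempty (else cut is empty)
    have hXne : X.Nonempty := by
      by_contra hcon
      rw [Set.not_nonempty_iff_eq_empty] at hcon
      subst hcon
      have : cutEdges (mlG k) (∅ : Set (ZMod (4 * k))) = ∅ := by
        ext e
        simp only [Set.mem_empty_iff_false, iff_false]
        rintro ⟨-, x, y, -, hx, -⟩
        exact hx
      rw [this] at h3
      simp at h3
    have hXcne : Xᶜ.Nonempty := by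
      by_contra hcon
      rw [Set.not_nonempty_iff_eq_empty, ← Set.compl_univ, compl_inj_iff] at hcon
      subst hcon
      have : cutEdges (mlG k) (Set.univ : Set (ZMod (4 * k))) = ∅ := by
        ext e
        simp only [Set.mem_empty_iff_false, iff_false]
        rintro ⟨-, x, y, -, -, hy⟩
        exact hy (Set.mem_univ y)
      rw [this] at h3
      simp at h3
    obtain ⟨v, hv⟩ := hXne
    obtain ⟨w, hw⟩ := hXcne
    rw [Set.mem_compl_iff] at hw
    have hcard := ml_cut_ncard hk X
    rw [h3] at hcard
    have heven := ml_D1_even hk X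
    -- D1 nonempty
    obtain ⟨p, hp1, hp2⟩ := ml_exists_exit hk hv hw
    have hD1ne : {v : ZMod (4 * k) | ¬(v ∈ X ↔ v + 1 ∈ X)}.ncard ≠ 0 := by
      intro h0
      rw [Set.ncard_eq_zero (Set.toFinite _)] at h0
      revert h0
      intro hcon
      have : p ∈ {v : ZMod (4 * k) | ¬(v ∈ X ↔ v + 1 ∈ X)} := by
        simp only [Set.mem_setOf_eq]; tauto
      rw [hcon] at this
      exact this
    have h2 : {v : ZMod (4 * k) | ¬(v ∈ X ↔ v + 1 ∈ X)}.ncard = 2 := by omega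
    have hkk : {v : ZMod (4 * k) | ¬(v ∈ X ↔ v + C ∈ X)}.ncard = 2 := by omega
    exact ml_two_two_trivial hk h2 hkk

end Six

section Seven
variable {k : ℕ}

local notation "C" => ((2 * k : ℕ) : ZMod (4 * k))

/-- The doubleton-deleted Möbius ladder (a "ladder"). -/
def mlG' (k : ℕ) : SimpleGraph (ZMod (4 * k)) :=
  (mlG k).deleteEdges {s(0, 1), s(((2 * k : ℕ) : ZMod (4 * k)), ((2 * k : ℕ) : ZMod (4 * k)) + 1)}

lemma ml_c_add_one_ne_zero (hk : 2 ≤ k) : ((2 * k : ℕ) : ZMod (4 * k)) + 1 ≠ 0 := by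
  intro h
  exact ml_c_ne_neg_one hk (by linear_combination h)

lemma ml_step_eq_e1 (hk : 2 ≤ k) {v : ZMod (4 * k)} :
    s(v, v + 1) = s((0 : ZMod (4 * k)), 1) ↔ v = 0 := by
  have h : s((0 : ZMod (4 * k)), 1) = s((0 : ZMod (4 * k)), 0 + 1) := by rw [zero_add]
  rw [h, ml_s_step_inj hk]

lemma ml_G'_adj_step (hk : 2 ≤ k) {v : ZMod (4 * k)} (h0 : v ≠ 0) (hC : v ≠ C) :
    (mlG' k).Adj v (v + 1) := by
  rw [mlG', deleteEdges_adj]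
  refine ⟨(ml_adj_iff hk).mpr (Or.inl rfl), ?_⟩
  simp only [Set.mem_insert_iff, Set.mem_singleton_iff]
  rintro (h | h)
  · exact h0 ((ml_step_eq_e1 hk).mp h)
  · exact hC ((ml_s_step_inj hk).mp h)

lemma ml_G'_adj_rung (hk : 2 ≤ k) (v : ZMod (4 * k)) : (mlG' k).Adj v (v + C) := by
  rw [mlG', deleteEdges_adj]
  refine ⟨ml_fR_adj hk v, ?_⟩
  simp only [Set.mem_insert_iff, Set.mem_singleton_iff]
  rintro (h | h)
  · have h' : s((0 : ZMod (4 * k)), 0 + 1) = s(v, v + C) := by rw [zero_add, h]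
    exact ml_s_step_ne_rung hk h'
  · exact ml_s_step_ne_rung hk h.symm

lemma ml_G'_adj_cases (hk : 2 ≤ k) {u w : ZMod (4 * k)} (h : (mlG' k).Adj u w) :
    (w = u + 1 ∧ u ≠ 0 ∧ u ≠ C) ∨ (u = w + 1 ∧ w ≠ 0 ∧ w ≠ C) ∨ (w = u + C) := by
  rw [mlG', deleteEdges_adj] at h
  obtain ⟨hb, hmem⟩ := h
  simp only [Set.mem_insert_iff, Set.mem_singleton_iff] at hmem
  push_neg at hmem
  rcases (ml_adj_iff hk).mp hb with hcase | hcase | hcase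
  · left
    refine ⟨hcase, ?_, ?_⟩
    · intro h0; subst hcase; subst h0; exact hmem.1 ((ml_step_eq_e1 hk).mpr rfl)
    · intro h0; subst hcase; subst h0; exact hmem.2 ((ml_s_step_inj hk).mpr rfl)
  · right; left
    refine ⟨hcase, ?_, ?_⟩
    · intro h0
      subst hcase; subst h0
      exact hmem.1 (by rw [Sym2.eq_swap]; exact (ml_step_eq_e1 hk).mpr rfl)
    · intro h0
      subst hcase; subst h0
      exact hmem.2 (by rw [Sym2.eq_swap])
  · right; right; exact hcase

lemma ml_G'_reach_A (hk : 2 ≤ k) : ∀ m : ℕ, m ≤ 2 * k - 1 →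
    (mlG' k).Reachable (((2 * k - m : ℕ)) : ZMod (4 * k)) C := by
  intro m
  induction m with
  | zero => intro _; rw [Nat.sub_zero]
  | succ m ih =>
    intro hm
    have ihm := ih (by omega)
    have ht : (2 * k - (m + 1) : ℕ) = (2 * k - m - 1 : ℕ) := by omega
    have ht2 : (2 * k - m : ℕ) = (2 * k - m - 1 : ℕ) + 1 := by omega
    set t : ℕ := 2 * k - m - 1 with hts
    have htlt : 1 ≤ t ∧ t ≤ 2 * k - 1 := by omega
    have hadj : (mlG' k).Adj ((t : ℕ) : ZMod (4 * k)) (((t : ℕ) : ZMod (4 * k)) + 1) := by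
      apply ml_G'_adj_step hk
      · intro h; rw [ml_cast_eq_zero_iff hk (by omega)] at h; omega
      · intro h; rw [ml_cast_eq_iff hk (by omega) (by omega)] at h; omega
    have hcast : ((t : ℕ) : ZMod (4 * k)) + 1 = (((t + 1 : ℕ)) : ZMod (4 * k)) := by push_cast; ring
    rw [ht]
    rw [ht2] at ihm
    rw [hcast] at hadj
    exact hadj.reachable.trans ihm

lemma ml_G'_reach_B (hk : 2 ≤ k) : ∀ m : ℕ, m ≤ 2 * k - 2 →
    (mlG' k).Reachable 0 ((4 * k - 1 - m : ℕ) : ZMod (4 * k)) := by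
  intro m
  induction m with
  | zero =>
    intro _
    rw [Nat.sub_zero]
    have hadj : (mlG' k).Adj (((4 * k - 1 : ℕ)) : ZMod (4 * k))
        ((((4 * k - 1 : ℕ)) : ZMod (4 * k)) + 1) := by
      apply ml_G'_adj_step hk
      · intro h; rw [ml_cast_eq_zero_iff hk (by omega)] at h; omega
      · intro h; rw [ml_cast_eq_iff hk (by omega) (by omega)] at h; omega
    have hcast : (((4 * k - 1 : ℕ)) : ZMod (4 * k)) + 1 = 0 := by
      have : (((4 * k - 1 : ℕ)) : ZMod (4 * k)) + 1 = (((4 * k - 1 + 1 : ℕ)) : ZMod (4 * k)) := by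
        push_cast; ring
      rw [this, (by omega : 4 * k - 1 + 1 = 4 * k), ZMod.natCast_self]
    rw [hcast] at hadj
    exact hadj.symm.reachable
  | succ m ih =>
    intro hm
    have ihm := ih (by omega)
    set t : ℕ := 4 * k - 1 - (m + 1) with hts
    have htfacts : 2 * k + 1 ≤ t ∧ t = 4 * k - 2 - m ∧ t + 1 = 4 * k - 1 - m := by omega
    have hadj : (mlG' k).Adj ((t : ℕ) : ZMod (4 * k)) (((t : ℕ) : ZMod (4 * k)) + 1) := by
      apply ml_G'_adj_step hk
      · intro h; rw [ml_cast_eq_zero_iff hk (by omega)] at h; omega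
      · intro h; rw [ml_cast_eq_iff hk (by omega) (by omega)] at h; omega
    have hcast : ((t : ℕ) : ZMod (4 * k)) + 1 = (((t + 1 : ℕ)) : ZMod (4 * k)) := by push_cast; ring
    rw [hcast, htfacts.2.2] at hadj
    exact (ihm.trans hadj.symm.reachable)

lemma ml_G'_connected (hk : 2 ≤ k) : (mlG' k).Connected := by
  haveI := ml_neZero hk
  rw [connected_iff]
  refine ⟨?_, ⟨0⟩⟩
  have h0C : (mlG' k).Reachable 0 C := by
    have := (ml_G'_adj_rung hk 0).reachable
    rwa [zero_add] at this
  have key : ∀ w : ZMod (4 * k), (mlG' k).Reachable 0 w := by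
    intro w
    have hw : w = ((w.val : ℕ) : ZMod (4 * k)) := (ZMod.natCast_zmod_val w).symm
    have hwlt := ZMod.val_lt w
    rcases Nat.lt_or_ge w.val (2 * k + 1) with hcase | hcase
    · by_cases h0 : w.val = 0
      · have : w = 0 := by rw [hw, h0, Nat.cast_zero]
        rw [this]
      · have hA := ml_G'_reach_A hk (2 * k - w.val) (by omega)
        rw [(by omega : 2 * k - (2 * k - w.val) = w.val)] at hA
        rw [hw]
        exact h0C.trans hA.symm
    · have hB := ml_G'_reach_B hk (4 * k - 1 - w.val) (by omega)
      rw [(by omega : 4 * k - 1 - (4 * k - 1 - w.val) = w.val)] at hB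
      rw [hw]
      exact hB
  intro u v
  exact (key u).symm.trans (key v)

end Seven

section Eight
variable {k : ℕ}

local notation "C" => ((2 * k : ℕ) : ZMod (4 * k))

lemma ml_G'_step_pm (hk : 2 ≤ k) {v : ZMod (4 * k)} (h0 : v ≠ 0) (hC : v ≠ C) :
    ∃ M : (mlG' k).Subgraph, M.IsPerfectMatching ∧ s(v, v + 1) ∈ M.edgeSet := by
  have hC0 := ml_c_ne_zero hk
  have h1 := ml_one_ne_zero hk
  have hC1 := ml_c_ne_one hk
  have hCp1 := ml_c_add_one_ne_zero hk
  have hcc := ml_c_add_c hk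
  set f : ZMod (4 * k) → ZMod (4 * k) := fun u =>
    if u = v then v + 1 else if u = v + 1 then v
    else if u = v + C then v + C + 1 else if u = v + C + 1 then v + C else u + C with hf
  have hfv : f v = v + 1 := by rw [hf]; exact if_pos rfl
  have hd1 : v + 1 ≠ v := fun h => h1 (by linear_combination h)
  have hd2 : v + C ≠ v := fun h => hC0 (by linear_combination h)
  have hd3 : v + C ≠ v + 1 := fun h => hC1 (by linear_combination h)
  have hd4 : v + C + 1 ≠ v := fun h => hCp1 (by linear_combination h)
  have hd5 : v + C + 1 ≠ v + 1 := fun h => hC0 (by linear_combination h)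
  have hd6 : v + C + 1 ≠ v + C := fun h => h1 (by linear_combination h)
  have hfv1 : f (v + 1) = v := by rw [hf]; simp only; rw [if_neg hd1]; simp
  have hfvC : f (v + C) = v + C + 1 := by
    rw [hf]; simp only; rw [if_neg hd2, if_neg hd3]; simp
  have hfvC1 : f (v + C + 1) = v + C := by
    rw [hf]; simp only; rw [if_neg hd4, if_neg hd5, if_neg hd6]; simp
  have hfother : ∀ u, u ≠ v → u ≠ v + 1 → u ≠ v + C → u ≠ v + C + 1 → f u = u + C := by
    intro u hu1 hu2 hu3 hu4
    rw [hf]; simp only; rw [if_neg hu1, if_neg hu2, if_neg hu3, if_neg hu4]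
  have hinv : ∀ u, f (f u) = u := by
    intro u
    by_cases hu1 : u = v
    · subst hu1; rw [hfv, hfv1]
    · by_cases hu2 : u = v + 1
      · subst hu2; rw [hfv1, hfv]
      · by_cases hu3 : u = v + C
        · subst hu3; rw [hfvC, hfvC1]
        · by_cases hu4 : u = v + C + 1
          · subst hu4; rw [hfvC1, hfvC]
          · rw [hfother u hu1 hu2 hu3 hu4]
            have g1 : u + C ≠ v := fun h => hu3 (by linear_combination h - hcc)
            have g2 : u + C ≠ v + 1 := fun h => hu4 (by linear_combination h - hcc)
            have g3 : u + C ≠ v + C := fun h => hu1 (by linear_combination h)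
            have g4 : u + C ≠ v + C + 1 := fun h => hu2 (by linear_combination h)
            rw [hfother _ g1 g2 g3 g4]
            exact ml_fR_invol hk u
  have hstep1 : (mlG' k).Adj v (v + 1) := ml_G'_adj_step hk h0 hC
  have hstep2 : (mlG' k).Adj (v + C) (v + C + 1) := by
    apply ml_G'_adj_step hk
    · intro h; exact hC (by linear_combination h - hcc)
    · intro h; exact h0 (by linear_combination h)
  have hadj : ∀ u, (mlG' k).Adj u (f u) := by
    intro u
    by_cases hu1 : u = v
    · subst hu1; rw [hfv]; exact hstep1
    · by_cases hu2 : u = v + 1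
      · subst hu2; rw [hfv1]; exact hstep1.symm
      · by_cases hu3 : u = v + C
        · subst hu3; rw [hfvC]; exact hstep2
        · by_cases hu4 : u = v + C + 1
          · subst hu4; rw [hfvC1]; exact hstep2.symm
          · rw [hfother u hu1 hu2 hu3 hu4]
            exact ml_G'_adj_rung hk u
  exact ⟨matchOf (mlG' k) f hinv hadj, matchOf_isPM, matchOf_edge.mpr (Or.inl hfv)⟩

lemma ml_G'_edge_cases (hk : 2 ≤ k) {e : Sym2 (ZMod (4 * k))}
    (he : e ∈ (mlG' k).edgeSet) :
    (∃ v, v ≠ 0 ∧ v ≠ C ∧ e = s(v, v + 1)) ∨ (∃ v, e = s(v, v + C)) := by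
  rw [mlG', edgeSet_deleteEdges] at he
  obtain ⟨hbase, hnot⟩ := he
  simp only [Set.mem_insert_iff, Set.mem_singleton_iff] at hnot
  push_neg at hnot
  rcases ml_edge_cases hk hbase with ⟨v, rfl⟩ | ⟨v, rfl⟩
  · left
    refine ⟨v, ?_, ?_, rfl⟩
    · intro h0; subst h0; exact hnot.1 ((ml_step_eq_e1 hk).mpr rfl)
    · intro h0; subst h0; exact hnot.2 rfl
  · right; exact ⟨v, rfl⟩

lemma ml_G'_matching_covered (hk : 2 ≤ k) : MatchingCovered (mlG' k) := by
  refine ⟨ml_G'_connected hk, ⟨s(0, 0 + C), (ml_G'_adj_rung hk 0)⟩, ?_⟩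
  intro e he
  rcases ml_G'_edge_cases hk he with ⟨v, h0, hC, rfl⟩ | ⟨v, rfl⟩
  · exact ml_G'_step_pm hk h0 hC
  · exact ⟨matchOf (mlG' k) (· + C) (ml_fR_invol hk) (ml_G'_adj_rung hk), matchOf_isPM,
      matchOf_edge.mpr (Or.inl rfl)⟩

end Eight

section Nine
variable {k : ℕ}

local notation "C" => ((2 * k : ℕ) : ZMod (4 * k))

lemma ml_fin2_ne {p q : Prop} [Decidable p] [Decidable q] (h : ¬(p ↔ q)) :
    (if p then (0 : Fin 2) else 1) ≠ (if q then (0 : Fin 2) else 1) := by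
  by_cases hp : p <;> by_cases hq : q
  · exact absurd (iff_of_true hp hq) h
  · rw [if_pos hp, if_neg hq]; decide
  · rw [if_neg hp, if_pos hq]; decide
  · exact absurd (iff_of_false hp hq) h

def mlColor (k : ℕ) (v : ZMod (4 * k)) : Fin 2 :=
  if ((1 ≤ v.val ∧ v.val ≤ 2 * k) ↔ v.val % 2 = 0) then 0 else 1

lemma ml_G'_colorable (hk : 2 ≤ k) : (mlG' k).Colorable 2 := by
  haveI := ml_neZero hk
  refine ⟨SimpleGraph.Coloring.mk (mlColor k) ?_⟩
  intro u w hadj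
  have key : ∀ x : ZMod (4 * k), x ≠ 0 → x ≠ C → mlColor k x ≠ mlColor k (x + 1) := by
    intro x hx0 hxC
    have hj := ZMod.val_lt x
    have hj0 : x.val ≠ 0 := fun h => hx0 (by rw [← ZMod.natCast_zmod_val x, h, Nat.cast_zero])
    have hjC : x.val ≠ 2 * k := fun h => hxC (by rw [← ZMod.natCast_zmod_val x, h])
    have hv1 := ml_val_add_one hk x
    unfold mlColor
    apply ml_fin2_ne
    by_cases htop : x.val + 1 = 4 * k
    · rw [if_pos htop] at hv1; rw [hv1]; omega
    · rw [if_neg htop] at hv1; rw [hv1]; omega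
  have keyr : ∀ x : ZMod (4 * k), mlColor k x ≠ mlColor k (x + C) := by
    intro x
    have hj := ZMod.val_lt x
    have hvC := ml_val_add_c hk x
    unfold mlColor
    apply ml_fin2_ne
    by_cases hlt : x.val < 2 * k
    · rw [if_pos hlt] at hvC; rw [hvC]; omega
    · rw [if_neg hlt] at hvC; rw [hvC]; omega
  rcases ml_G'_adj_cases hk hadj with ⟨rfl, h1, h2⟩ | ⟨rfl, h1, h2⟩ | rfl
  · exact key u h1 h2
  · exact (key w h1 h2).symm
  · exact keyr u

lemma ml_not_colorable (hk : 2 ≤ k) : ¬ (mlG k).Colorable 2 := by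
  haveI := ml_neZero hk
  rintro ⟨Cg⟩
  have fin2 : ∀ x y z : Fin 2, x ≠ z → y ≠ z → x = y := by decide
  have hstep : ∀ v : ZMod (4 * k), Cg (v + 1) ≠ Cg v := fun v =>
    (Cg.valid ((ml_adj_iff hk).mpr (Or.inl rfl))).symm
  have h01 : Cg 1 ≠ Cg 0 := by have := hstep 0; rwa [zero_add] at this
  have hpar : ∀ i : ℕ, Cg ((i : ℕ) : ZMod (4 * k)) = if i % 2 = 0 then Cg 0 else Cg 1 := by
    intro i
    induction i with
    | zero => rw [Nat.cast_zero, if_pos (by omega)]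
    | succ m ih =>
      have hcast : ((m + 1 : ℕ) : ZMod (4 * k)) = ((m : ℕ) : ZMod (4 * k)) + 1 := by
        push_cast; ring
      have hne := hstep ((m : ℕ) : ZMod (4 * k))
      rw [hcast]
      by_cases hp : m % 2 = 0
      · rw [if_pos hp] at ih
        rw [if_neg (by omega)]
        exact fin2 _ _ (Cg 0) (ih ▸ hne) h01
      · rw [if_neg hp] at ih
        rw [if_pos (by omega)]
        exact fin2 _ _ (Cg 1) (ih ▸ hne) (Ne.symm h01)
  have h2k := hpar (2 * k)
  rw [if_pos (by omega)] at h2k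
  have hadj0 : (mlG k).Adj 0 C := by
    have := ml_fR_adj hk 0; rwa [zero_add] at this
  exact (Cg.valid hadj0) h2k.symm

lemma ml_near_bipartite (hk : 2 ≤ k) : NearBipartite (mlG k) := by
  refine ⟨ml_matching_covered hk, ml_not_colorable hk,
    s(0, 1), s(C, C + 1), ?_, ?_, ?_, ?_, ?_⟩
  · rw [mem_edgeSet, ml_adj_iff hk]
    exact Or.inl (zero_add 1).symm
  · rw [mem_edgeSet, ml_adj_iff hk]
    exact Or.inl rfl
  · intro h
    have h0 : s((0 : ZMod (4 * k)), 0 + 1) = s(C, C + 1) := by rwa [zero_add]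
    exact ml_c_ne_zero hk ((ml_s_step_inj hk).mp h0).symm
  · exact ml_G'_colorable hk
  · exact ml_G'_matching_covered hk

lemma ml_brick (hk : 2 ≤ k) : IsBrick (mlG k) := by
  refine ⟨ml_matching_covered hk, ml_not_colorable hk, ?_⟩
  intro X ht
  obtain ⟨h1, h2⟩ := ml_tight_counts hk ht
  exact ml_two_two_trivial hk h1 h2

end Nine

/-- For every integer `k ≥ 2`, the Möbius ladder of order `4k`, i.e.
the circulant graph on `ZMod (4k)` with connection set `{1, −1, 2k}`, is an essentially
4-edge-connected cubic near-bipartite brick. -/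
theorem stmt15 (k : ℕ) (hk : 2 ≤ k) :
    Cubic (SimpleGraph.circulantGraph
        ({1, -1, ((2 * k : ℕ) : ZMod (4 * k))} : Set (ZMod (4 * k)))) ∧
    EssFourEdgeConnected (SimpleGraph.circulantGraph
        ({1, -1, ((2 * k : ℕ) : ZMod (4 * k))} : Set (ZMod (4 * k)))) ∧
    NearBipartite (SimpleGraph.circulantGraph
        ({1, -1, ((2 * k : ℕ) : ZMod (4 * k))} : Set (ZMod (4 * k)))) ∧
    IsBrick (SimpleGraph.circulantGraph
        ({1, -1, ((2 * k : ℕ) : ZMod (4 * k))} : Set (ZMod (4 * k)))) :=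
  ⟨ml_cubic hk, ml_ess4 hk, ml_near_bipartite hk, ml_brick hk⟩

end Paper
end

section
/- Every cubic brick on 4 vertices is isomorphic to K4, and every cubic brick on 6 vertices is isomorphic to the complement of the 6-cycle C6. -/
namespace Paper

open SimpleGraph

variable {V : Type*}

/-- Adjacency on `Fin 6` where vertex `0` is adjacent to exactly `1,2,3`, and the
adjacency among vertices `1,…,5` is given by the 10 low bits of `a`. -/
private def adjF (a : ℕ) (i j : Fin 6) : Bool :=
  let x := min i.val j.val; let y := max i.val j.val
  if x = y then false
  else if x = 0 then decide (y ≤ 3)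
  else a.testBit ((x-1)*(10-x)/2 + (y-x-1))

private def prismB (i j : Fin 6) : Bool :=
  i ≠ j && (j.val + 6 - i.val) % 6 ≠ 1 && (i.val + 6 - j.val) % 6 ≠ 1

private abbrev Q6 (a : ℕ) (i j pi pj : Fin 6) : Prop := pi ≠ pj ∧ adjF a i j = prismB pi pj

private abbrev Concl6 (a : ℕ) : Prop :=
  ∃ p0 p1 : Fin 6, Q6 a 0 1 p0 p1 ∧
    ∃ p2, Q6 a 0 2 p0 p2 ∧ Q6 a 1 2 p1 p2 ∧
      ∃ p3, Q6 a 0 3 p0 p3 ∧ Q6 a 1 3 p1 p3 ∧ Q6 a 2 3 p2 p3 ∧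
        ∃ p4, Q6 a 0 4 p0 p4 ∧ Q6 a 1 4 p1 p4 ∧ Q6 a 2 4 p2 p4 ∧ Q6 a 3 4 p3 p4 ∧
          ∃ p5, Q6 a 0 5 p0 p5 ∧ Q6 a 1 5 p1 p5 ∧ Q6 a 2 5 p2 p5 ∧ Q6 a 3 5 p3 p5 ∧ Q6 a 4 5 p4 p5

private abbrev Hyp6 (a : ℕ) : Prop :=
  (a.testBit 0).toNat + (a.testBit 1).toNat + (a.testBit 2).toNat + (a.testBit 3).toNat = 2 ∧
  (a.testBit 0).toNat + (a.testBit 4).toNat + (a.testBit 5).toNat + (a.testBit 6).toNat = 2 ∧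
  (a.testBit 1).toNat + (a.testBit 4).toNat + (a.testBit 7).toNat + (a.testBit 8).toNat = 2 ∧
  (a.testBit 2).toNat + (a.testBit 5).toNat + (a.testBit 7).toNat + (a.testBit 9).toNat = 3 ∧
  (a.testBit 3).toNat + (a.testBit 6).toNat + (a.testBit 8).toNat + (a.testBit 9).toNat = 3 ∧
  (∀ c < 64, ∃ i j : Fin 6, adjF a i j = true ∧ c.testBit i.val = c.testBit j.val)

set_option synthInstance.maxSize 5000 in
set_option synthInstance.maxHeartbeats 2000000 in
private noncomputable instance iconcl6 (a : ℕ) : Decidable (Concl6 a) := inferInstance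
private noncomputable instance ihyp6 (a : ℕ) : Decidable (Hyp6 a) := inferInstance
private noncomputable instance iimp6 (a : ℕ) : Decidable (Hyp6 a → Concl6 a) := inferInstance

set_option maxRecDepth 4000 in
set_option maxHeartbeats 4000000 in
private theorem key6 : ∀ a < 1024, Hyp6 a → Concl6 a := by decide

private theorem prism_correct :
    ∀ x y : Fin 6, prismB x y = true ↔ (SimpleGraph.cycleGraph 6)ᶜ.Adj x y := by decide

private theorem prismB_symm : ∀ x y : Fin 6, prismB x y = prismB y x := by decide
private theorem prismB_diag : ∀ x : Fin 6, prismB x x = false := by decide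

private theorem adjF_symm (a : ℕ) (i j : Fin 6) : adjF a i j = adjF a j i := by
  simp [adjF, Nat.min_comm, Nat.max_comm]

private theorem adjF_diag (a : ℕ) (i : Fin 6) : adjF a i i = false := by
  simp [adjF]

set_option maxRecDepth 4000 in
private theorem tb10 : ∀ b0 b1 b2 b3 b4 b5 b6 b7 b8 b9 : Bool,
    (b0.toNat + 2*b1.toNat + 4*b2.toNat + 8*b3.toNat + 16*b4.toNat + 32*b5.toNat
      + 64*b6.toNat + 128*b7.toNat + 256*b8.toNat + 512*b9.toNat) < 1024 ∧
    (b0.toNat + 2*b1.toNat + 4*b2.toNat + 8*b3.toNat + 16*b4.toNat + 32*b5.toNat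
      + 64*b6.toNat + 128*b7.toNat + 256*b8.toNat + 512*b9.toNat).testBit 0 = b0 ∧
    (b0.toNat + 2*b1.toNat + 4*b2.toNat + 8*b3.toNat + 16*b4.toNat + 32*b5.toNat
      + 64*b6.toNat + 128*b7.toNat + 256*b8.toNat + 512*b9.toNat).testBit 1 = b1 ∧
    (b0.toNat + 2*b1.toNat + 4*b2.toNat + 8*b3.toNat + 16*b4.toNat + 32*b5.toNat
      + 64*b6.toNat + 128*b7.toNat + 256*b8.toNat + 512*b9.toNat).testBit 2 = b2 ∧
    (b0.toNat + 2*b1.toNat + 4*b2.toNat + 8*b3.toNat + 16*b4.toNat + 32*b5.toNat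
      + 64*b6.toNat + 128*b7.toNat + 256*b8.toNat + 512*b9.toNat).testBit 3 = b3 ∧
    (b0.toNat + 2*b1.toNat + 4*b2.toNat + 8*b3.toNat + 16*b4.toNat + 32*b5.toNat
      + 64*b6.toNat + 128*b7.toNat + 256*b8.toNat + 512*b9.toNat).testBit 4 = b4 ∧
    (b0.toNat + 2*b1.toNat + 4*b2.toNat + 8*b3.toNat + 16*b4.toNat + 32*b5.toNat
      + 64*b6.toNat + 128*b7.toNat + 256*b8.toNat + 512*b9.toNat).testBit 5 = b5 ∧
    (b0.toNat + 2*b1.toNat + 4*b2.toNat + 8*b3.toNat + 16*b4.toNat + 32*b5.toNat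
      + 64*b6.toNat + 128*b7.toNat + 256*b8.toNat + 512*b9.toNat).testBit 6 = b6 ∧
    (b0.toNat + 2*b1.toNat + 4*b2.toNat + 8*b3.toNat + 16*b4.toNat + 32*b5.toNat
      + 64*b6.toNat + 128*b7.toNat + 256*b8.toNat + 512*b9.toNat).testBit 7 = b7 ∧
    (b0.toNat + 2*b1.toNat + 4*b2.toNat + 8*b3.toNat + 16*b4.toNat + 32*b5.toNat
      + 64*b6.toNat + 128*b7.toNat + 256*b8.toNat + 512*b9.toNat).testBit 8 = b8 ∧
    (b0.toNat + 2*b1.toNat + 4*b2.toNat + 8*b3.toNat + 16*b4.toNat + 32*b5.toNat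
      + 64*b6.toNat + 128*b7.toNat + 256*b8.toNat + 512*b9.toNat).testBit 9 = b9 := by
  decide

private theorem iffhelp {b : Bool} {P : Prop} [Decidable P] (h : b = decide P) :
    b = true ↔ P := by
  rw [h]; exact decide_eq_true_iff

private theorem toNat_decide (P : Prop) [Decidable P] : (decide P).toNat = if P then 1 else 0 := by
  by_cases h : P <;> simp [h]

private theorem degSum {V : Type*} [Fintype V] [DecidableEq V] (G : SimpleGraph V)
    [DecidableRel G.Adj] {v w1 w2 w3 w4 w5 : V}
    (hu : ∀ x : V, x = v ∨ x = w1 ∨ x = w2 ∨ x = w3 ∨ x = w4 ∨ x = w5)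
    (h12 : w1 ≠ w2) (h13 : w1 ≠ w3) (h14 : w1 ≠ w4) (h15 : w1 ≠ w5)
    (h23 : w2 ≠ w3) (h24 : w2 ≠ w4) (h25 : w2 ≠ w5)
    (h34 : w3 ≠ w4) (h35 : w3 ≠ w5) (h45 : w4 ≠ w5)
    (hdeg : (G.neighborSet v).ncard = 3) :
    (decide (G.Adj v w1)).toNat + (decide (G.Adj v w2)).toNat + (decide (G.Adj v w3)).toNat
      + (decide (G.Adj v w4)).toNat + (decide (G.Adj v w5)).toNat = 3 := by
  have hset : G.neighborSet v
      = ((({w1,w2,w3,w4,w5} : Finset V).filter (fun w => G.Adj v w)) : Finset V) := by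
    ext x
    simp only [SimpleGraph.mem_neighborSet, Finset.coe_filter, Set.mem_setOf_eq,
      Finset.mem_insert, Finset.mem_singleton]
    constructor
    · intro hx
      refine ⟨?_, hx⟩
      rcases hu x with h|h|h|h|h|h
      · exact absurd (by rwa [h] at hx) (G.loopless.irrefl v)
      all_goals tauto
    · rintro ⟨_, hx⟩; exact hx
  rw [hset, Set.ncard_coe_finset, Finset.card_filter,
    Finset.sum_insert (by simp [h12, h13, h14, h15]),
    Finset.sum_insert (by simp [h23, h24, h25]),
    Finset.sum_insert (by simp [h34, h35]),
    Finset.sum_insert (by simp [h45]),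
    Finset.sum_singleton] at hdeg
  simp only [toNat_decide]
  omega

set_option maxHeartbeats 1600000 in
/-- Every cubic brick on 4 vertices is isomorphic to `K₄`, and every
cubic brick on 6 vertices is isomorphic to the complement of the 6-cycle. -/
theorem stmt16 {V : Type*} [Fintype V] (G : SimpleGraph V)
    (hG : IsBrick G) (hcubic : Cubic G) :
    (Nat.card V = 4 → Nonempty (G ≃g (⊤ : SimpleGraph (Fin 4)))) ∧
    (Nat.card V = 6 → Nonempty (G ≃g (SimpleGraph.cycleGraph 6)ᶜ)) := by
  classical
  constructor
  · -- the 4-vertex case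
    intro h4
    have hcard : Fintype.card V = 4 := by rw [← Nat.card_eq_fintype_card]; exact h4
    have hAdjAll : ∀ u w : V, u ≠ w → G.Adj u w := by
      intro u w hne
      have hsub : G.neighborSet u ⊆ {u}ᶜ := by
        intro x hx
        simp only [Set.mem_compl_iff, Set.mem_singleton_iff]
        exact fun hxu => G.loopless.irrefl u (by rwa [hxu] at hx)
      have hc : ({u} : Set V)ᶜ.ncard = 3 := by
        have h := Set.ncard_add_ncard_compl ({u} : Set V)
        rw [Set.ncard_singleton] at h
        omega
      have heq := Set.eq_of_subset_of_ncard_le hsub (by rw [hc, hcubic u]) (Set.toFinite _)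
      have hw : w ∈ G.neighborSet u := by
        rw [heq]
        simp only [Set.mem_compl_iff, Set.mem_singleton_iff]
        exact Ne.symm hne
      exact hw
    have eV : V ≃ Fin 4 := Fintype.equivFinOfCardEq hcard
    refine ⟨⟨eV, @fun u w => ?_⟩⟩
    simp only [top_adj]
    constructor
    · intro h
      exact hAdjAll u w (fun he => h (by rw [he]))
    · intro h he
      exact G.ne_of_adj h (eV.injective he)
  · -- the 6-vertex case
    intro h6
    have hcard : Fintype.card V = 6 := by rw [← Nat.card_eq_fintype_card]; exact h6
    have hneV : Nonempty V := Fintype.card_pos_iff.mp (by omega)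
    obtain ⟨v0⟩ := hneV
    obtain ⟨n1, n2, n3, h12, h13, h23, hsetN⟩ := Set.ncard_eq_three.mp (hcubic v0)
    have hA1 : G.Adj v0 n1 := by
      have : n1 ∈ G.neighborSet v0 := by rw [hsetN]; simp
      exact this
    have hA2 : G.Adj v0 n2 := by
      have : n2 ∈ G.neighborSet v0 := by rw [hsetN]; simp
      exact this
    have hA3 : G.Adj v0 n3 := by
      have : n3 ∈ G.neighborSet v0 := by rw [hsetN]; simp
      exact this
    have d01 : v0 ≠ n1 := G.ne_of_adj hA1
    have d02 : v0 ≠ n2 := G.ne_of_adj hA2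
    have d03 : v0 ≠ n3 := G.ne_of_adj hA3
    have hS4 : ({v0, n1, n2, n3} : Set V).ncard = 4 := by
      rw [Set.ncard_insert_of_notMem (by simp [d01, d02, d03]),
        Set.ncard_insert_of_notMem (by simp [h12, h13]),
        Set.ncard_insert_of_notMem (by simp [h23]), Set.ncard_singleton]
    have hS2 : (({v0, n1, n2, n3} : Set V)ᶜ).ncard = 2 := by
      have h := Set.ncard_add_ncard_compl ({v0, n1, n2, n3} : Set V)
      omega
    obtain ⟨m1, m2, hm12, hSeq⟩ := Set.ncard_eq_two.mp hS2
    have hm1mem : m1 ∈ (({v0, n1, n2, n3} : Set V)ᶜ) := by rw [hSeq]; simp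
    have hm2mem : m2 ∈ (({v0, n1, n2, n3} : Set V)ᶜ) := by rw [hSeq]; simp
    have hm1' : ¬(m1 = v0 ∨ m1 = n1 ∨ m1 = n2 ∨ m1 = n3) := by
      simpa [Set.mem_compl_iff, Set.mem_insert_iff, Set.mem_singleton_iff] using hm1mem
    have hm2' : ¬(m2 = v0 ∨ m2 = n1 ∨ m2 = n2 ∨ m2 = n3) := by
      simpa [Set.mem_compl_iff, Set.mem_insert_iff, Set.mem_singleton_iff] using hm2mem
    push_neg at hm1' hm2'
    obtain ⟨e10, e11, e12, e13⟩ := hm1'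
    obtain ⟨e20, e21, e22, e23⟩ := hm2'
    have hN1 : ¬ G.Adj v0 m1 := by
      intro h
      have hm : m1 ∈ G.neighborSet v0 := h
      rw [hsetN] at hm
      simp only [Set.mem_insert_iff, Set.mem_singleton_iff] at hm
      tauto
    have hN2 : ¬ G.Adj v0 m2 := by
      intro h
      have hm : m2 ∈ G.neighborSet v0 := h
      rw [hsetN] at hm
      simp only [Set.mem_insert_iff, Set.mem_singleton_iff] at hm
      tauto
    have huniv : ∀ x : V, x = v0 ∨ x = n1 ∨ x = n2 ∨ x = n3 ∨ x = m1 ∨ x = m2 := by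
      intro x
      by_cases hx0 : x = v0; · tauto
      by_cases hx1 : x = n1; · tauto
      by_cases hx2 : x = n2; · tauto
      by_cases hx3 : x = n3; · tauto
      have hx : x ∈ (({v0, n1, n2, n3} : Set V)ᶜ) := by
        simp only [Set.mem_compl_iff, Set.mem_insert_iff, Set.mem_singleton_iff]
        tauto
      rw [hSeq] at hx
      simp only [Set.mem_insert_iff, Set.mem_singleton_iff] at hx
      tauto
    -- the labeling
    have hsurj : Function.Surjective (![v0, n1, n2, n3, m1, m2] : Fin 6 → V) := by
      intro x
      rcases huniv x with h|h|h|h|h|h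
      exacts [⟨0, h.symm⟩, ⟨1, h.symm⟩, ⟨2, h.symm⟩, ⟨3, h.symm⟩, ⟨4, h.symm⟩, ⟨5, h.symm⟩]
    have hbijv : Function.Bijective (![v0, n1, n2, n3, m1, m2] : Fin 6 → V) :=
      (Fintype.bijective_iff_surjective_and_card _).mpr
        ⟨hsurj, by rw [Fintype.card_fin, hcard]⟩
    set vec : Fin 6 → V := ![v0, n1, n2, n3, m1, m2] with hvecdef
    set E : Fin 6 ≃ V := Equiv.ofBijective vec hbijv with hEdef
    -- the bit encoding
    obtain ⟨hlt, hb0, hb1, hb2, hb3, hb4, hb5, hb6, hb7, hb8, hb9⟩ :=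
      tb10 (decide (G.Adj n1 n2)) (decide (G.Adj n1 n3)) (decide (G.Adj n1 m1))
        (decide (G.Adj n1 m2)) (decide (G.Adj n2 n3)) (decide (G.Adj n2 m1))
        (decide (G.Adj n2 m2)) (decide (G.Adj n3 m1)) (decide (G.Adj n3 m2))
        (decide (G.Adj m1 m2))
    set a : ℕ := (decide (G.Adj n1 n2)).toNat + 2*(decide (G.Adj n1 n3)).toNat
      + 4*(decide (G.Adj n1 m1)).toNat + 8*(decide (G.Adj n1 m2)).toNat
      + 16*(decide (G.Adj n2 n3)).toNat + 32*(decide (G.Adj n2 m1)).toNat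
      + 64*(decide (G.Adj n2 m2)).toNat + 128*(decide (G.Adj n3 m1)).toNat
      + 256*(decide (G.Adj n3 m2)).toNat + 512*(decide (G.Adj m1 m2)).toNat with hadef
    -- adjacency transfer
    have hAdj : ∀ i j : Fin 6, (adjF a i j = true ↔ G.Adj (vec i) (vec j)) := by
      intro i j
      fin_cases i <;> fin_cases j
      exacts [iff_of_false (fun h => Bool.noConfusion ((adjF_diag _ _).symm.trans h)) (G.loopless.irrefl _),
        iff_of_true rfl hA1,
        iff_of_true rfl hA2,
        iff_of_true rfl hA3,
        iff_of_false (fun h => Bool.noConfusion h) hN1,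
        iff_of_false (fun h => Bool.noConfusion h) hN2,
        iff_of_true rfl hA1.symm,
        iff_of_false (fun h => Bool.noConfusion ((adjF_diag _ _).symm.trans h)) (G.loopless.irrefl _),
        iffhelp hb0,
        iffhelp hb1,
        iffhelp hb2,
        iffhelp hb3,
        iff_of_true rfl hA2.symm,
        (iffhelp hb0).trans (G.adj_comm n1 n2),
        iff_of_false (fun h => Bool.noConfusion ((adjF_diag _ _).symm.trans h)) (G.loopless.irrefl _),
        iffhelp hb4,
        iffhelp hb5,
        iffhelp hb6,
        iff_of_true rfl hA3.symm,
        (iffhelp hb1).trans (G.adj_comm n1 n3),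
        (iffhelp hb4).trans (G.adj_comm n2 n3),
        iff_of_false (fun h => Bool.noConfusion ((adjF_diag _ _).symm.trans h)) (G.loopless.irrefl _),
        iffhelp hb7,
        iffhelp hb8,
        iff_of_false (fun h => Bool.noConfusion h) (fun h => hN1 h.symm),
        (iffhelp hb2).trans (G.adj_comm n1 m1),
        (iffhelp hb5).trans (G.adj_comm n2 m1),
        (iffhelp hb7).trans (G.adj_comm n3 m1),
        iff_of_false (fun h => Bool.noConfusion ((adjF_diag _ _).symm.trans h)) (G.loopless.irrefl _),
        iffhelp hb9,
        iff_of_false (fun h => Bool.noConfusion h) (fun h => hN2 h.symm),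
        (iffhelp hb3).trans (G.adj_comm n1 m2),
        (iffhelp hb6).trans (G.adj_comm n2 m2),
        (iffhelp hb8).trans (G.adj_comm n3 m2),
        (iffhelp hb9).trans (G.adj_comm m1 m2),
        iff_of_false (fun h => Bool.noConfusion ((adjF_diag _ _).symm.trans h)) (G.loopless.irrefl _)]
    -- degree sums
    have hd1 := degSum G (v := n1) (w1 := v0) (w2 := n2) (w3 := n3) (w4 := m1) (w5 := m2)
      (fun x => by rcases huniv x with h|h|h|h|h|h <;> tauto)
      d02 d03 (Ne.symm e10) (Ne.symm e20)
      h23 (Ne.symm e12) (Ne.symm e22) (Ne.symm e13) (Ne.symm e23) hm12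
      (hcubic n1)
    have hd2 := degSum G (v := n2) (w1 := v0) (w2 := n1) (w3 := n3) (w4 := m1) (w5 := m2)
      (fun x => by rcases huniv x with h|h|h|h|h|h <;> tauto)
      d01 d03 (Ne.symm e10) (Ne.symm e20)
      h13 (Ne.symm e11) (Ne.symm e21) (Ne.symm e13) (Ne.symm e23) hm12
      (hcubic n2)
    have hd3 := degSum G (v := n3) (w1 := v0) (w2 := n1) (w3 := n2) (w4 := m1) (w5 := m2)
      (fun x => by rcases huniv x with h|h|h|h|h|h <;> tauto)
      d01 d02 (Ne.symm e10) (Ne.symm e20)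
      h12 (Ne.symm e11) (Ne.symm e21) (Ne.symm e12) (Ne.symm e22) hm12
      (hcubic n3)
    have hd4 := degSum G (v := m1) (w1 := v0) (w2 := n1) (w3 := n2) (w4 := n3) (w5 := m2)
      (fun x => by rcases huniv x with h|h|h|h|h|h <;> tauto)
      d01 d02 d03 (Ne.symm e20)
      h12 h13 (Ne.symm e21) h23 (Ne.symm e22) (Ne.symm e23)
      (hcubic m1)
    have hd5 := degSum G (v := m2) (w1 := v0) (w2 := n1) (w3 := n2) (w4 := n3) (w5 := m1)
      (fun x => by rcases huniv x with h|h|h|h|h|h <;> tauto)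
      d01 d02 d03 (Ne.symm e10)
      h12 h13 (Ne.symm e11) h23 (Ne.symm e12) (Ne.symm e13)
      (hcubic m2)
    -- normalize orientations and known edges in the degree sums
    rw [show (decide (G.Adj n1 v0)) = true from decide_eq_true hA1.symm] at hd1
    rw [show (decide (G.Adj n2 v0)) = true from decide_eq_true hA2.symm,
      show (decide (G.Adj n2 n1)) = (decide (G.Adj n1 n2)) from
        decide_eq_decide.mpr (G.adj_comm n2 n1)] at hd2
    rw [show (decide (G.Adj n3 v0)) = true from decide_eq_true hA3.symm,
      show (decide (G.Adj n3 n1)) = (decide (G.Adj n1 n3)) from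
        decide_eq_decide.mpr (G.adj_comm n3 n1),
      show (decide (G.Adj n3 n2)) = (decide (G.Adj n2 n3)) from
        decide_eq_decide.mpr (G.adj_comm n3 n2)] at hd3
    rw [show (decide (G.Adj m1 v0)) = false from decide_eq_false (fun h => hN1 h.symm),
      show (decide (G.Adj m1 n1)) = (decide (G.Adj n1 m1)) from
        decide_eq_decide.mpr (G.adj_comm m1 n1),
      show (decide (G.Adj m1 n2)) = (decide (G.Adj n2 m1)) from
        decide_eq_decide.mpr (G.adj_comm m1 n2),
      show (decide (G.Adj m1 n3)) = (decide (G.Adj n3 m1)) from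
        decide_eq_decide.mpr (G.adj_comm m1 n3)] at hd4
    rw [show (decide (G.Adj m2 v0)) = false from decide_eq_false (fun h => hN2 h.symm),
      show (decide (G.Adj m2 n1)) = (decide (G.Adj n1 m2)) from
        decide_eq_decide.mpr (G.adj_comm m2 n1),
      show (decide (G.Adj m2 n2)) = (decide (G.Adj n2 m2)) from
        decide_eq_decide.mpr (G.adj_comm m2 n2),
      show (decide (G.Adj m2 n3)) = (decide (G.Adj n3 m2)) from
        decide_eq_decide.mpr (G.adj_comm m2 n3),
      show (decide (G.Adj m2 m1)) = (decide (G.Adj m1 m2)) from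
        decide_eq_decide.mpr (G.adj_comm m2 m1)] at hd5
    simp only [Bool.toNat_true, Bool.toNat_false] at hd1 hd2 hd3 hd4 hd5
    -- non-bipartiteness
    have hbip : ∀ c : ℕ, c < 64 →
        ∃ i j : Fin 6, adjF a i j = true ∧ c.testBit i.val = c.testBit j.val := by
      intro c _
      by_contra hno
      push_neg at hno
      refine hG.2.1 ⟨SimpleGraph.Coloring.mk
        (fun v => if c.testBit (E.symm v).val then (1 : Fin 2) else 0) ?_⟩
      intro u w hadj heq
      have huw : adjF a (E.symm u) (E.symm w) = true := by
        refine (hAdj _ _).mpr ?_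
        rw [show vec (E.symm u) = u from E.apply_symm_apply u,
          show vec (E.symm w) = w from E.apply_symm_apply w]
        exact hadj
      have := hno _ _ huw
      rcases hcu : c.testBit (E.symm u).val <;> rcases hcw : c.testBit (E.symm w).val <;>
        simp [hcu, hcw] at heq this
    -- apply the finite verification
    obtain ⟨p0, p1, ⟨ne01, q01⟩, p2, ⟨ne02, q02⟩, ⟨ne12, q12⟩, p3, ⟨ne03, q03⟩, ⟨ne13, q13⟩,
      ⟨ne23, q23⟩, p4, ⟨ne04, q04⟩, ⟨ne14, q14⟩, ⟨ne24, q24⟩, ⟨ne34, q34⟩, p5, ⟨ne05, q05⟩,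
      ⟨ne15, q15⟩, ⟨ne25, q25⟩, ⟨ne35, q35⟩, ⟨ne45, q45⟩⟩ :=
      key6 a hlt ⟨by rw [hb0, hb1, hb2, hb3]; omega,
        by rw [hb0, hb4, hb5, hb6]; omega,
        by rw [hb1, hb4, hb7, hb8]; omega,
        by rw [hb2, hb5, hb7, hb9]; omega,
        by rw [hb3, hb6, hb8, hb9]; omega,
        hbip⟩
    set σvec : Fin 6 → Fin 6 := ![p0, p1, p2, p3, p4, p5] with hσdef
    have hinjσ : Function.Injective σvec := by
      intro x y h
      fin_cases x <;> fin_cases y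
      exacts [rfl,
        absurd h ne01,
        absurd h ne02,
        absurd h ne03,
        absurd h ne04,
        absurd h ne05,
        absurd h (Ne.symm ne01),
        rfl,
        absurd h ne12,
        absurd h ne13,
        absurd h ne14,
        absurd h ne15,
        absurd h (Ne.symm ne02),
        absurd h (Ne.symm ne12),
        rfl,
        absurd h ne23,
        absurd h ne24,
        absurd h ne25,
        absurd h (Ne.symm ne03),
        absurd h (Ne.symm ne13),
        absurd h (Ne.symm ne23),
        rfl,
        absurd h ne34,
        absurd h ne35,
        absurd h (Ne.symm ne04),
        absurd h (Ne.symm ne14),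
        absurd h (Ne.symm ne24),
        absurd h (Ne.symm ne34),
        rfl,
        absurd h ne45,
        absurd h (Ne.symm ne05),
        absurd h (Ne.symm ne15),
        absurd h (Ne.symm ne25),
        absurd h (Ne.symm ne35),
        absurd h (Ne.symm ne45),
        rfl]
    have hbijσ : Function.Bijective σvec :=
      (Fintype.bijective_iff_injective_and_card _).mpr ⟨hinjσ, rfl⟩
    set σ : Fin 6 ≃ Fin 6 := Equiv.ofBijective σvec hbijσ with hσ
    have hMatch : ∀ i j : Fin 6, adjF a i j = prismB (σvec i) (σvec j) := by
      intro i j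
      fin_cases i <;> fin_cases j
      exacts [(adjF_diag _ _).trans (prismB_diag _).symm,
        q01,
        q02,
        q03,
        q04,
        q05,
        ((adjF_symm _ _ _).trans q01).trans (prismB_symm _ _),
        (adjF_diag _ _).trans (prismB_diag _).symm,
        q12,
        q13,
        q14,
        q15,
        ((adjF_symm _ _ _).trans q02).trans (prismB_symm _ _),
        ((adjF_symm _ _ _).trans q12).trans (prismB_symm _ _),
        (adjF_diag _ _).trans (prismB_diag _).symm,
        q23,
        q24,
        q25,
        ((adjF_symm _ _ _).trans q03).trans (prismB_symm _ _),
        ((adjF_symm _ _ _).trans q13).trans (prismB_symm _ _),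
        ((adjF_symm _ _ _).trans q23).trans (prismB_symm _ _),
        (adjF_diag _ _).trans (prismB_diag _).symm,
        q34,
        q35,
        ((adjF_symm _ _ _).trans q04).trans (prismB_symm _ _),
        ((adjF_symm _ _ _).trans q14).trans (prismB_symm _ _),
        ((adjF_symm _ _ _).trans q24).trans (prismB_symm _ _),
        ((adjF_symm _ _ _).trans q34).trans (prismB_symm _ _),
        (adjF_diag _ _).trans (prismB_diag _).symm,
        q45,
        ((adjF_symm _ _ _).trans q05).trans (prismB_symm _ _),
        ((adjF_symm _ _ _).trans q15).trans (prismB_symm _ _),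
        ((adjF_symm _ _ _).trans q25).trans (prismB_symm _ _),
        ((adjF_symm _ _ _).trans q35).trans (prismB_symm _ _),
        ((adjF_symm _ _ _).trans q45).trans (prismB_symm _ _),
        (adjF_diag _ _).trans (prismB_diag _).symm]
    refine ⟨⟨(E.symm).trans σ, @fun u w => ?_⟩⟩
    show (SimpleGraph.cycleGraph 6)ᶜ.Adj (σvec (E.symm u)) (σvec (E.symm w)) ↔ G.Adj u w
    rw [← prism_correct, ← hMatch]
    refine (hAdj _ _).trans ?_
    rw [show vec (E.symm u) = u from E.apply_symm_apply u,
      show vec (E.symm w) = w from E.apply_symm_apply w]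



end Paper
end
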